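/- arXiv:2004.11653 — 2 statements merged into one kernel-verified Lean document; each statement's English description precedes it below -/
import Mathlib

section
/- Let R and S be reflexive digraphs in 𝔗_a such that no proper arc vw of R admits a path of length ≥ 2 in R* from v to w, and likewise for S (i.e., R* equals the loopless transitive reduction R_× of R, and S* = S_×). If #𝓗(G,R) ≤ #𝓗(G,S) for every G ∈ 𝔗_a, then #𝓢(G,R) ≤ #𝓢(G,S) for every G ∈ 𝔗_a with 𝓢(G,S) ≠ ∅. -/
/-- A finite digraph: a finite nonempty vertex set `V ⊆ ℕ` together with an
arc set `A ⊆ V × V`. -/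
structure Dgraph where
  V : Finset ℕ
  nonempty : V.Nonempty
  A : Finset (ℕ × ℕ)
  A_sub : ∀ p ∈ A, p.1 ∈ V ∧ p.2 ∈ V

namespace Dgraph

/-- The set of proper arcs of `G`, i.e. the arc set of `G*`. -/
def Astar (G : Dgraph) : Finset (ℕ × ℕ) := G.A.filter (fun p => p.1 ≠ p.2)

/-- `G` is reflexive. -/
def IsRefl (G : Dgraph) : Prop := ∀ v ∈ G.V, (v, v) ∈ G.A

/-- `p` is a path in `G` (a nonempty list of pairwise distinct vertices,
consecutive ones joined by arcs).  Its length as a path is `p.length - 1`. -/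
def IsPath (G : Dgraph) (p : List ℕ) : Prop :=
  p ≠ [] ∧ p.Nodup ∧ (∀ v ∈ p, v ∈ G.V) ∧ p.Chain' (fun v w => (v, w) ∈ G.A)

/-- `p` is a path in `G*`. -/
def IsPathStar (G : Dgraph) (p : List ℕ) : Prop :=
  p ≠ [] ∧ p.Nodup ∧ (∀ v ∈ p, v ∈ G.V) ∧ p.Chain' (fun v w => (v, w) ∈ G.A ∧ v ≠ w)

/-- `G*` contains a closed walk. -/
def HasClosedWalkStar (G : Dgraph) : Prop :=
  ∃ p : List ℕ, (∀ v ∈ p, v ∈ G.V) ∧ p.Chain' (fun v w => (v, w) ∈ G.A ∧ v ≠ w) ∧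
    2 ≤ p.length ∧ p.head? = p.getLast?

/-- membership in the class `𝔗ₐ`: `G*` is acyclic. -/
def MemTa (G : Dgraph) : Prop := ¬ G.HasClosedWalkStar

/-- The height of `G`: the maximal length of a path in `G`. -/
noncomputable def height (G : Dgraph) : ℕ :=
  sSup {n | ∃ p, G.IsPath p ∧ p.length = n + 1}

/-- The interval `[v,w]_G`. -/
def interval (G : Dgraph) (v w : ℕ) : Finset ℕ :=
  G.V.filter (fun z => (v, z) ∈ G.A ∧ (z, w) ∈ G.A)

/-- `ι(v,w)_G`, the cardinality of the interval `[v,w]_G`. -/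
def iota (G : Dgraph) (v w : ℕ) : ℕ := (G.interval v w).card

/-- The set `𝓗(G,H)` of homomorphisms from `G` to `H` (represented as total
maps `ℕ → ℕ`, normalized to `0` outside of `V(G)`). -/
def Hom (G H : Dgraph) : Set (ℕ → ℕ) :=
  {f | (∀ v ∈ G.V, f v ∈ H.V) ∧ (∀ p ∈ G.A, (f p.1, f p.2) ∈ H.A) ∧
    ∀ v, v ∉ G.V → f v = 0}

/-- The set `𝓢(G,H)` of strict homomorphisms from `G` to `H`. -/
def SHom (G H : Dgraph) : Set (ℕ → ℕ) :=
  {f ∈ Hom G H | ∀ p ∈ G.Astar, f p.1 ≠ f p.2}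

/-- `μ_ξ(G)`, for a homomorphism `ξ` from `G` into `H`. -/
def mu (G H : Dgraph) (f : ℕ → ℕ) : ℕ :=
  ∑ p ∈ G.Astar, H.iota (f p.1) (f p.2)

/-- `L` is a subgraph of `G`. -/
def Subgraph (L G : Dgraph) : Prop := L.V ⊆ G.V ∧ L.A ⊆ G.A

/-- Restriction of a map to a vertex set (normalized to `0` outside). -/
def restrict (X : Finset ℕ) (f : ℕ → ℕ) : ℕ → ℕ := fun x => if x ∈ X then f x else 0

/-- `𝓜(L,H)`: homomorphisms from `L` to `H` with maximal `μ`. -/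
def MSet (L H : Dgraph) : Set (ℕ → ℕ) :=
  {f ∈ Hom L H | ∀ g ∈ Hom L H, mu L H g ≤ mu L H f}

/-- `𝓜^𝓛(G,H)`. -/
def MLSet (G H : Dgraph) (𝓛 : Set Dgraph) : Set (ℕ → ℕ) :=
  {f ∈ Hom G H | ∀ L ∈ 𝓛, restrict L.V f ∈ MSet L H}

/-- `𝓙^𝓛_{G,H'}(ξ)` for `ξ ∈ 𝓗(G,H)`. -/
def JSet (G H H' : Dgraph) (𝓛 : Set Dgraph) (ξ : ℕ → ℕ) : Set (ℕ → ℕ) :=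
  {ζ ∈ Hom G H' | ∀ L ∈ 𝓛, ∀ p ∈ L.Astar,
    H'.iota (ζ p.1) (ζ p.2) = H.iota (ξ p.1) (ξ p.2)}

/-- The digraph `P_×` of a path `P = P_0, …, P_ℓ`: vertex set `{P_0,…,P_ℓ}`
and arcs `P_{i-1}P_i`. -/
def pathGraph (P : List ℕ) (h : P ≠ []) : Dgraph where
  V := P.toFinset
  nonempty := by
    obtain ⟨a, t, rfl⟩ := List.exists_cons_of_ne_nil h
    exact ⟨a, by simp⟩
  A := (P.zip P.tail).toFinset
  A_sub := by
    intro p hp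
    rw [List.mem_toFinset] at hp
    have h1 := List.of_mem_zip hp
    exact ⟨List.mem_toFinset.mpr h1.1, List.mem_toFinset.mpr (List.mem_of_mem_tail h1.2)⟩

/-- `𝓛(G)`: the set of the digraphs `P_×` for the paths `P` of length `h_G` in `G`. -/
def LSet (G : Dgraph) : Set Dgraph :=
  {D | ∃ (P : List ℕ) (h : P ≠ []), G.IsPath P ∧ P.length = G.height + 1 ∧
    D = pathGraph P h}

/-- The class `𝕽`: reflexive digraphs `R ∈ 𝔗ₐ` with
`𝓜^{𝓛(R)}(R,R) ∩ 𝓢(R,R) ≠ ∅`. -/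
def MemR (R : Dgraph) : Prop :=
  R.MemTa ∧ R.IsRefl ∧ (MLSet R R (LSet R) ∩ SHom R R).Nonempty

/-- `G` is a poset: reflexive, antisymmetric and transitive. -/
def IsPoset (G : Dgraph) : Prop :=
  G.IsRefl ∧ (∀ v w, (v, w) ∈ G.A → (w, v) ∈ G.A → v = w) ∧
    (∀ u v w, (u, v) ∈ G.A → (v, w) ∈ G.A → (u, w) ∈ G.A)

/-- The class `𝔗ₐ^{=n}`: digraphs in `𝔗ₐ` of height `n` in which every vertex
lies on a path of length `n`. -/
def MemTaEq (n : ℕ) (G : Dgraph) : Prop :=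
  G.MemTa ∧ G.height = n ∧ ∀ v ∈ G.V, ∃ p, G.IsPath p ∧ p.length = n + 1 ∧ v ∈ p

/-- A maximal path in `G`: no path in `G` properly contains its vertex set. -/
def MaximalPath (G : Dgraph) (P : List ℕ) : Prop :=
  G.IsPath P ∧ ∀ Q, G.IsPath Q → (∀ v ∈ P, v ∈ Q) → ∀ v ∈ Q, v ∈ P

end Dgraph

open Dgraph

/-- `R_× = R*`: no proper arc `vw` of `R` admits a path of length ≥ 2 in `R*`
from `v` to `w`. -/
def NoTwoStep (R : Dgraph) : Prop :=
  ∀ p ∈ R.Astar, ¬ ∃ q : List ℕ, R.IsPathStar q ∧ 3 ≤ q.length ∧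
    q.head? = some p.1 ∧ q.getLast? = some p.2

namespace StrictAux

open Dgraph

/-! ### Destutter lemmas -/

lemma destutter'_head? (a : ℕ) (l : List ℕ) :
    (l.destutter' (· ≠ ·) a).head? = some a := by
  induction l generalizing a with
  | nil => rfl
  | cons b l ih =>
    rw [List.destutter'_cons]
    by_cases h : a ≠ b
    · simp [h]
    · simp only [h, if_false]
      exact ih a

lemma destutter'_getLast? (a : ℕ) (l : List ℕ) :
    (l.destutter' (· ≠ ·) a).getLast? = (a :: l).getLast? := by
  induction l generalizing a with
  | nil => rfl
  | cons b l ih =>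
    rw [List.destutter'_cons]
    by_cases h : a ≠ b
    · rw [if_pos h]
      cases hd : l.destutter' (· ≠ ·) b with
      | nil => exact absurd hd (List.destutter'_ne_nil _ _)
      | cons u t =>
        rw [List.getLast?_cons_cons, ← hd, ih b, List.getLast?_cons_cons]
    · rw [if_neg h]
      push_neg at h
      subst h
      rw [ih a, List.getLast?_cons_cons]

lemma destutter'_chain (Q : ℕ → ℕ → Prop) (a : ℕ) (l : List ℕ)
    (h : (a :: l).Chain' (fun x y => x = y ∨ Q x y)) :
    (l.destutter' (· ≠ ·) a).Chain' Q := by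
  induction l generalizing a with
  | nil => exact List.isChain_singleton a
  | cons b l ih =>
    replace h := List.isChain_cons_cons.1 h
    obtain ⟨hab, hbl⟩ := h
    rw [List.destutter'_cons]
    by_cases hne : a ≠ b
    · rw [if_pos hne]
      refine List.isChain_cons.2 ?_
      constructor
      · intro y hy
        rw [destutter'_head? b l] at hy
        cases hy
        rcases hab with h | h
        · exact absurd h hne
        · exact h
      · exact ih b hbl
    · rw [if_neg hne]
      push_neg at hne
      subst hne
      exact ih a hbl

lemma destutter'_singleton_all (a c : ℕ) (l : List ℕ)
    (h : l.destutter' (· ≠ ·) a = [c]) : ∀ x ∈ a :: l, x = a := by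
  induction l generalizing a with
  | nil => simp
  | cons b l ih =>
    rw [List.destutter'_cons] at h
    by_cases hne : a ≠ b
    · rw [if_pos hne] at h
      exfalso
      cases hd : l.destutter' (· ≠ ·) b with
      | nil => exact absurd hd (List.destutter'_ne_nil _ _)
      | cons u t => rw [hd] at h; simp at h
    · rw [if_neg hne] at h
      push_neg at hne
      subst hne
      intro x hx
      rcases List.mem_cons.1 hx with rfl | hx
      · rfl
      · exact ih a h x hx

lemma destutter'_subset (a : ℕ) (l : List ℕ) :
    ∀ x ∈ l.destutter' (· ≠ ·) a, x ∈ a :: l :=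
  fun _ hx => (List.destutter'_sublist l (· ≠ ·) a).subset hx

/-! ### Finiteness of Hom sets -/

lemma hom_finite (G H : Dgraph) : (Hom G H).Finite := by
  classical
  have hsub : Hom G H ⊆ Set.range
      (fun g : {x // x ∈ G.V} → {y // y ∈ H.V} =>
        fun v => if h : v ∈ G.V then (g ⟨v, h⟩ : ℕ) else 0) := by
    intro f hf
    obtain ⟨h1, _h2, h3⟩ := hf
    refine ⟨fun v => ⟨f v.1, h1 v.1 v.2⟩, ?_⟩
    funext x
    by_cases hx : x ∈ G.V
    · simp [hx]
    · simp [hx, h3 x hx]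
  exact (Set.finite_range _).subset hsub

lemma shom_finite (G H : Dgraph) : (SHom G H).Finite :=
  (hom_finite G H).subset (fun _ hf => hf.1)

end StrictAux
namespace StrictAux

/-! ### The gadget graph `Gk` -/

/-- Base for encoding fresh vertices. -/
def B (G : Dgraph) : ℕ := G.V.sup id + 1

lemma lt_B {G : Dgraph} {v : ℕ} (hv : v ∈ G.V) : v < B G :=
  Nat.lt_succ_of_le (Finset.le_sup (f := id) hv)

/-- Encoding of the midpoint vertices. -/
def enc (G : Dgraph) (q : (ℕ × ℕ) × ℕ) : ℕ :=
  B G + Nat.pair (Nat.pair q.1.1 q.1.2) q.2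

/-- Decoding. -/
def dec (G : Dgraph) (x : ℕ) : (ℕ × ℕ) × ℕ :=
  (((x - B G).unpair.1.unpair.1, (x - B G).unpair.1.unpair.2), (x - B G).unpair.2)

lemma dec_enc (G : Dgraph) (q : (ℕ × ℕ) × ℕ) : dec G (enc G q) = q := by
  simp [dec, enc, Nat.add_sub_cancel_left, Nat.unpair_pair]

lemma enc_not_mem (G : Dgraph) (q : (ℕ × ℕ) × ℕ) : enc G q ∉ G.V := by
  intro h
  have := lt_B h
  simp only [enc] at this
  omega

/-- Index set for midpoints: proper arcs × copies. -/
def Arcs (G : Dgraph) (k : ℕ) : Finset ((ℕ × ℕ) × ℕ) := G.Astar ×ˢ Finset.range k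

/-- The midpoint vertex set. -/
def Mid (G : Dgraph) (k : ℕ) : Finset ℕ := (Arcs G k).image (enc G)

lemma arc_fst_mem_V {G : Dgraph} {k : ℕ} {q : (ℕ × ℕ) × ℕ} (hq : q ∈ Arcs G k) :
    q.1.1 ∈ G.V := by
  have h1 : q.1 ∈ G.Astar := (Finset.mem_product.1 hq).1
  have h2 : q.1 ∈ G.A := (Finset.mem_filter.1 h1).1
  exact (G.A_sub _ h2).1

lemma arc_snd_mem_V {G : Dgraph} {k : ℕ} {q : (ℕ × ℕ) × ℕ} (hq : q ∈ Arcs G k) :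
    q.1.2 ∈ G.V := by
  have h1 : q.1 ∈ G.Astar := (Finset.mem_product.1 hq).1
  have h2 : q.1 ∈ G.A := (Finset.mem_filter.1 h1).1
  exact (G.A_sub _ h2).2

lemma arc_mem_A {G : Dgraph} {k : ℕ} {q : (ℕ × ℕ) × ℕ} (hq : q ∈ Arcs G k) :
    q.1 ∈ G.A :=
  (Finset.mem_filter.1 (Finset.mem_product.1 hq).1).1

lemma arc_ne {G : Dgraph} {k : ℕ} {q : (ℕ × ℕ) × ℕ} (hq : q ∈ Arcs G k) :
    q.1.1 ≠ q.1.2 :=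
  (Finset.mem_filter.1 (Finset.mem_product.1 hq).1).2

/-- The gadget graph: `G` together with, for each proper arc `vw` and each
`i < k`, a fresh midpoint `m` with arcs `v → m → w`. -/
def Gk (G : Dgraph) (k : ℕ) : Dgraph where
  V := G.V ∪ Mid G k
  nonempty := by
    obtain ⟨v, hv⟩ := G.nonempty
    exact ⟨v, Finset.mem_union_left _ hv⟩
  A := G.A ∪ (Arcs G k).image (fun q => (q.1.1, enc G q))
        ∪ (Arcs G k).image (fun q => (enc G q, q.1.2))
  A_sub := by
    intro p hp
    rcases Finset.mem_union.1 hp with hp | hp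
    · rcases Finset.mem_union.1 hp with hp | hp
      · exact ⟨Finset.mem_union_left _ (G.A_sub p hp).1,
          Finset.mem_union_left _ (G.A_sub p hp).2⟩
      · obtain ⟨q, hq, rfl⟩ := Finset.mem_image.1 hp
        exact ⟨Finset.mem_union_left _ (arc_fst_mem_V hq),
          Finset.mem_union_right _ (Finset.mem_image_of_mem _ hq)⟩
    · obtain ⟨q, hq, rfl⟩ := Finset.mem_image.1 hp
      exact ⟨Finset.mem_union_right _ (Finset.mem_image_of_mem _ hq),
        Finset.mem_union_left _ (arc_snd_mem_V hq)⟩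

lemma mem_A_Gk {G : Dgraph} {k : ℕ} {p : ℕ × ℕ} :
    p ∈ (Gk G k).A ↔ p ∈ G.A ∨ (∃ q ∈ Arcs G k, p = (q.1.1, enc G q)) ∨
      (∃ q ∈ Arcs G k, p = (enc G q, q.1.2)) := by
  simp only [Gk, Finset.mem_union, Finset.mem_image]
  constructor
  · rintro ((h | h) | h)
    · exact Or.inl h
    · obtain ⟨q, hq, rfl⟩ := h
      exact Or.inr (Or.inl ⟨q, hq, rfl⟩)
    · obtain ⟨q, hq, rfl⟩ := h
      exact Or.inr (Or.inr ⟨q, hq, rfl⟩)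
  · rintro (h | ⟨q, hq, rfl⟩ | ⟨q, hq, rfl⟩)
    · exact Or.inl (Or.inl h)
    · exact Or.inl (Or.inr ⟨q, hq, rfl⟩)
    · exact Or.inr ⟨q, hq, rfl⟩

lemma arcA_mem_Gk {G : Dgraph} {k : ℕ} {p : ℕ × ℕ} (hp : p ∈ G.A) : p ∈ (Gk G k).A :=
  mem_A_Gk.2 (Or.inl hp)

lemma arc2_mem_Gk {G : Dgraph} {k : ℕ} {q : (ℕ × ℕ) × ℕ} (hq : q ∈ Arcs G k) :
    (q.1.1, enc G q) ∈ (Gk G k).A :=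
  mem_A_Gk.2 (Or.inr (Or.inl ⟨q, hq, rfl⟩))

lemma arc3_mem_Gk {G : Dgraph} {k : ℕ} {q : (ℕ × ℕ) × ℕ} (hq : q ∈ Arcs G k) :
    (enc G q, q.1.2) ∈ (Gk G k).A :=
  mem_A_Gk.2 (Or.inr (Or.inr ⟨q, hq, rfl⟩))

lemma Gk_V {G : Dgraph} {k : ℕ} : (Gk G k).V = G.V ∪ Mid G k := rfl

lemma mid_not_mem_V {G : Dgraph} {k : ℕ} {x : ℕ} (hx : x ∈ Mid G k) : x ∉ G.V := by
  obtain ⟨q, _, rfl⟩ := Finset.mem_image.1 hx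
  exact enc_not_mem G q

end StrictAux
namespace StrictAux

/-! ### Acyclicity of the gadget -/

/-- Projection of gadget vertices back to `G`: midpoints go to the source of
their arc. -/
def phi (G : Dgraph) (x : ℕ) : ℕ := if x ∈ G.V then x else (dec G x).1.1

lemma phi_mem_V {G : Dgraph} {k : ℕ} {x : ℕ} (hx : x ∈ (Gk G k).V) :
    phi G x ∈ G.V := by
  rcases Finset.mem_union.1 hx with h | h
  · simpa [phi, h] using h
  · obtain ⟨q, hq, rfl⟩ := Finset.mem_image.1 h
    simp only [phi, enc_not_mem G q, if_false, dec_enc]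
    exact arc_fst_mem_V hq

lemma phi_of_mem {G : Dgraph} {x : ℕ} (hx : x ∈ G.V) : phi G x = x := if_pos hx

lemma phi_enc {G : Dgraph} (q : (ℕ × ℕ) × ℕ) : phi G (enc G q) = q.1.1 := by
  simp [phi, enc_not_mem G q, dec_enc]

lemma gk_arc_classify {G : Dgraph} {k : ℕ} {x y : ℕ}
    (h : (x, y) ∈ (Gk G k).A) (hxy : x ≠ y) :
    phi G x = phi G y ∨ ((phi G x, phi G y) ∈ G.A ∧ phi G x ≠ phi G y) := by
  rcases mem_A_Gk.1 h with h | ⟨q, hq, hpq⟩ | ⟨q, hq, hpq⟩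
  · have h1 := (G.A_sub _ h).1
    have h2 := (G.A_sub _ h).2
    rw [phi_of_mem h1, phi_of_mem h2]
    exact Or.inr ⟨h, hxy⟩
  · have hx : x = q.1.1 := congrArg Prod.fst hpq
    have hy : y = enc G q := congrArg Prod.snd hpq
    subst hx; subst hy
    rw [phi_of_mem (arc_fst_mem_V hq), phi_enc]
    exact Or.inl rfl
  · have hx : x = enc G q := congrArg Prod.fst hpq
    have hy : y = q.1.2 := congrArg Prod.snd hpq
    subst hx; subst hy
    rw [phi_of_mem (arc_snd_mem_V hq), phi_enc]
    exact Or.inr ⟨arc_mem_A hq, arc_ne hq⟩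

lemma gk_memTa (G : Dgraph) (hG : G.MemTa) (k : ℕ) : (Gk G k).MemTa := by
  rintro ⟨l, hlV, hlC, hlLen, hlCl⟩
  apply hG
  -- l has at least two elements
  obtain ⟨x₀, l₁, rfl⟩ : ∃ x₀ l₁, l = x₀ :: l₁ := by
    cases l with
    | nil => simp at hlLen
    | cons a t => exact ⟨a, t, rfl⟩
  obtain ⟨x₁, rest, rfl⟩ : ∃ x₁ rest, l₁ = x₁ :: rest := by
    cases l₁ with
    | nil => simp at hlLen
    | cons a t => exact ⟨a, t, rfl⟩
  set l : List ℕ := x₀ :: x₁ :: rest with hl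
  -- the lazy chain on the mapped list
  have hlazy : l.Chain' (fun v w =>
      phi G v = phi G w ∨ ((phi G v, phi G w) ∈ G.A ∧ phi G v ≠ phi G w)) := by
    refine hlC.imp ?_
    intro a b hab
    exact gk_arc_classify hab.1 hab.2
  have hmapchain : (l.map (phi G)).Chain' (fun v w =>
      v = w ∨ ((v, w) ∈ G.A ∧ v ≠ w)) := List.isChain_map_of_isChain (phi G) (fun _ _ h => h) hlazy
  have hmap : l.map (phi G) = phi G x₀ :: (x₁ :: rest).map (phi G) := rfl
  refine ⟨((x₁ :: rest).map (phi G)).destutter' (· ≠ ·) (phi G x₀), ?_, ?_, ?_, ?_⟩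
  · intro v hv
    have hv' : v ∈ l.map (phi G) := by
      rw [hmap]
      exact destutter'_subset _ _ v hv
    obtain ⟨x, hx, rfl⟩ := List.mem_map.1 hv'
    exact phi_mem_V (hlV x hx)
  · rw [hmap] at hmapchain
    exact destutter'_chain _ _ _ hmapchain
  · -- length at least 2
    by_contra hlen
    push_neg at hlen
    have hne := List.destutter'_ne_nil (l := (x₁ :: rest).map (phi G))
      (· ≠ ·) (a := phi G x₀)
    obtain ⟨c, hc⟩ : ∃ c, ((x₁ :: rest).map (phi G)).destutter' (· ≠ ·) (phi G x₀) = [c] := by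
      cases hd : ((x₁ :: rest).map (phi G)).destutter' (· ≠ ·) (phi G x₀) with
      | nil => exact absurd hd hne
      | cons u t =>
        cases t with
        | nil => exact ⟨u, rfl⟩
        | cons u' t' => rw [hd] at hlen; simp at hlen
    have hall : ∀ x ∈ l, phi G x = phi G x₀ := by
      intro x hx
      have : phi G x ∈ phi G x₀ :: (x₁ :: rest).map (phi G) := by
        rw [← hmap]
        exact List.mem_map_of_mem hx
      exact destutter'_singleton_all _ c _ hc _ this
    -- first step must be of the midpoint-entering kind
    have hstep0 : ((x₀, x₁) ∈ (Gk G k).A ∧ x₀ ≠ x₁) := (List.isChain_cons_cons.1 hlC).1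
    have hphi01 : phi G x₀ = phi G x₁ := (hall x₁ (by simp [hl])).symm
    have hcase0 := gk_arc_classify hstep0.1 hstep0.2
    have hx1mid : ∃ q ∈ Arcs G k, (x₀, x₁) = (q.1.1, enc G q) := by
      rcases mem_A_Gk.1 hstep0.1 with h | h | ⟨q, hq, hpq⟩
      · exact absurd hphi01 (by
          rw [phi_of_mem (G.A_sub _ h).1, phi_of_mem (G.A_sub _ h).2]
          exact hstep0.2)
      · exact h
      · exfalso
        have hx : x₀ = enc G q := congrArg Prod.fst hpq
        have hy : x₁ = q.1.2 := congrArg Prod.snd hpq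
        rw [hx, hy, phi_enc, phi_of_mem (arc_snd_mem_V hq)] at hphi01
        exact arc_ne hq hphi01
    obtain ⟨q, hq, hpq⟩ := hx1mid
    have hx1 : x₁ = enc G q := congrArg Prod.snd hpq
    cases rest with
    | nil =>
      -- closed walk of length 2: x₀ = x₁, contradiction
      have : some x₀ = some x₁ := by simpa [hl] using hlCl
      exact hstep0.2 (Option.some_injective _ this)
    | cons x₂ r =>
      have hstep1 : ((x₁, x₂) ∈ (Gk G k).A ∧ x₁ ≠ x₂) :=
        (List.isChain_cons_cons.1 (List.isChain_cons_cons.1 hlC).2).1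
      have hphi12 : phi G x₁ = phi G x₂ := by
        rw [hall x₁ (by simp [hl]), hall x₂ (by simp [hl])]
      have hx1notV : x₁ ∉ G.V := by
        rw [hx1]; exact enc_not_mem G q
      rcases mem_A_Gk.1 hstep1.1 with h | ⟨q', hq', hpq'⟩ | ⟨q', hq', hpq'⟩
      · exact hx1notV (G.A_sub _ h).1
      · exact hx1notV (by
          have : x₁ = q'.1.1 := congrArg Prod.fst hpq'
          rw [this]; exact arc_fst_mem_V hq')
      · have hx : x₁ = enc G q' := congrArg Prod.fst hpq'
        have hy : x₂ = q'.1.2 := congrArg Prod.snd hpq'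
        rw [hx, hy, phi_enc, phi_of_mem (arc_snd_mem_V hq')] at hphi12
        exact arc_ne hq' hphi12
  · -- head? = getLast?
    rw [destutter'_getLast? (phi G x₀) ((x₁ :: rest).map (phi G)), destutter'_head?]
    rw [← hmap, List.getLast?_map, ← hlCl]
    rfl

end StrictAux
namespace StrictAux

/-! ### Extensions of homomorphisms to the gadget -/

/-- Extension of `ξ : G → H` to the gadget, the midpoint of copy `q` going to
the image of the head or of the tail of its arc according to `q ∈ T`. -/
noncomputable def ext (G : Dgraph) (k : ℕ) (ξ : ℕ → ℕ) (T : Finset ((ℕ × ℕ) × ℕ)) :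
    ℕ → ℕ := fun x =>
  if x ∈ G.V then ξ x
  else if x ∈ Mid G k then (if dec G x ∈ T then ξ (dec G x).1.2 else ξ (dec G x).1.1)
  else 0

lemma ext_apply_mem {G : Dgraph} {k : ℕ} {ξ : ℕ → ℕ} {T : Finset ((ℕ × ℕ) × ℕ)}
    {v : ℕ} (hv : v ∈ G.V) : ext G k ξ T v = ξ v := if_pos hv

lemma enc_mem_Mid {G : Dgraph} {k : ℕ} {q : (ℕ × ℕ) × ℕ} (hq : q ∈ Arcs G k) :
    enc G q ∈ Mid G k := Finset.mem_image_of_mem _ hq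

lemma ext_apply_enc {G : Dgraph} {k : ℕ} {ξ : ℕ → ℕ} {T : Finset ((ℕ × ℕ) × ℕ)}
    {q : (ℕ × ℕ) × ℕ} (hq : q ∈ Arcs G k) :
    ext G k ξ T (enc G q) = if q ∈ T then ξ q.1.2 else ξ q.1.1 := by
  simp [ext, enc_not_mem G q, enc_mem_Mid hq, dec_enc]

lemma ext_mem_hom {R G : Dgraph} {k : ℕ} (hRr : R.IsRefl) {ξ : ℕ → ℕ}
    (hξ : ξ ∈ Hom G R) (T : Finset ((ℕ × ℕ) × ℕ)) :
    ext G k ξ T ∈ Hom (Gk G k) R := by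
  obtain ⟨h1, h2, h3⟩ := hξ
  refine ⟨?_, ?_, ?_⟩
  · intro v hv
    rcases Finset.mem_union.1 hv with h | h
    · rw [ext_apply_mem h]; exact h1 v h
    · obtain ⟨q, hq, rfl⟩ := Finset.mem_image.1 h
      rw [ext_apply_enc hq]
      by_cases hT : q ∈ T
      · rw [if_pos hT]; exact h1 _ (arc_snd_mem_V hq)
      · rw [if_neg hT]; exact h1 _ (arc_fst_mem_V hq)
  · intro p hp
    rcases mem_A_Gk.1 hp with h | ⟨q, hq, rfl⟩ | ⟨q, hq, rfl⟩
    · rw [ext_apply_mem (G.A_sub _ h).1, ext_apply_mem (G.A_sub _ h).2]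
      exact h2 p h
    · rw [ext_apply_mem (arc_fst_mem_V hq), ext_apply_enc hq]
      by_cases hT : q ∈ T
      · rw [if_pos hT]; exact h2 _ (arc_mem_A hq)
      · rw [if_neg hT]; exact hRr _ (h1 _ (arc_fst_mem_V hq))
    · rw [ext_apply_mem (arc_snd_mem_V hq), ext_apply_enc hq]
      by_cases hT : q ∈ T
      · rw [if_pos hT]; exact hRr _ (h1 _ (arc_snd_mem_V hq))
      · rw [if_neg hT]; exact h2 _ (arc_mem_A hq)
  · intro v hv
    rw [Gk_V, Finset.mem_union] at hv
    push_neg at hv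
    simp [ext, hv.1, hv.2]

lemma lower_bound (R G : Dgraph) (hRr : R.IsRefl) (k : ℕ) :
    (SHom G R).ncard * 2 ^ (G.Astar.card * k) ≤ (Hom (Gk G k) R).ncard := by
  classical
  rw [Set.ncard_eq_toFinset_card _ (shom_finite G R),
    Set.ncard_eq_toFinset_card _ (hom_finite (Gk G k) R)]
  have hcard : ((shom_finite G R).toFinset ×ˢ (Arcs G k).powerset).card
      = (shom_finite G R).toFinset.card * 2 ^ (G.Astar.card * k) := by
    rw [Finset.card_product, Finset.card_powerset]
    congr 1
    rw [Arcs, Finset.card_product, Finset.card_range]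
  rw [← hcard]
  refine Finset.card_le_card_of_injOn (fun p => ext G k p.1 p.2) ?_ ?_
  · rintro ⟨ξ, T⟩ hp
    rw [Finset.mem_coe, Finset.mem_product] at hp
    have hξ : ξ ∈ SHom G R := (shom_finite G R).mem_toFinset.1 hp.1
    rw [Finset.mem_coe, Set.Finite.mem_toFinset]
    exact ext_mem_hom hRr hξ.1 T
  · rintro ⟨ξ, T⟩ hp ⟨ξ', T'⟩ hp' heq
    simp only [Finset.coe_product, Set.mem_prod, Finset.mem_coe,
      Set.Finite.mem_toFinset, Finset.mem_powerset] at hp hp'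
    have hξ : ξ ∈ SHom G R := hp.1
    have hξ' : ξ' ∈ SHom G R := hp'.1
    have hfeq : ξ = ξ' := by
      funext x
      by_cases hx : x ∈ G.V
      · have : ext G k ξ T x = ext G k ξ' T' x := congrFun heq x
        rwa [ext_apply_mem hx, ext_apply_mem hx] at this
      · rw [hξ.1.2.2 x hx, hξ'.1.2.2 x hx]
    have hTeq : T = T' := by
      ext q
      by_cases hq : q ∈ Arcs G k
      · have : ext G k ξ T (enc G q) = ext G k ξ' T' (enc G q) :=
          congrFun heq (enc G q)
        rw [ext_apply_enc hq, ext_apply_enc hq] at this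
        have hne : ξ q.1.1 ≠ ξ q.1.2 :=
          hξ.2 q.1 (Finset.mem_product.1 hq).1
        rw [← hfeq] at this
        by_cases h1 : q ∈ T <;> by_cases h2 : q ∈ T' <;>
          simp [h1, h2] at this ⊢
        · exact hne this.symm
        · exact hne this
      · constructor
        · intro h; exact absurd (hp.2 h) hq
        · intro h; exact absurd (hp'.2 h) hq
    rw [hfeq, hTeq]

end StrictAux
namespace StrictAux

/-! ### The interval of an arc has only its two endpoints -/

lemma mem_pair {S : Dgraph} (hSt : S.MemTa) (hSred : NoTwoStep S) {a c z : ℕ}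
    (hac : (a, c) ∈ S.A) (hz : z ∈ S.V) (h1 : (a, z) ∈ S.A) (h2 : (z, c) ∈ S.A) :
    z = a ∨ z = c := by
  by_contra hcon
  push_neg at hcon
  obtain ⟨hza, hzc⟩ := hcon
  by_cases haceq : a = c
  · subst haceq
    exact hSt ⟨[a, z, a], by
      intro v hv
      simp only [List.mem_cons, List.not_mem_nil, or_false] at hv
      rcases hv with rfl | rfl | rfl
      · exact (S.A_sub _ hac).1
      · exact hz
      · exact (S.A_sub _ hac).1
      , by
      refine List.isChain_cons_cons.2 ⟨⟨h1, fun h => hza h.symm⟩, ?_⟩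
      exact List.isChain_cons_cons.2 ⟨⟨h2, hza⟩, List.isChain_singleton a⟩
      , by simp, by simp⟩
  · refine hSred (a, c) (Finset.mem_filter.2 ⟨hac, haceq⟩) ⟨[a, z, c], ?_, by simp, by simp, by simp⟩
    refine ⟨by simp, ?_, ?_, ?_⟩
    · simp only [List.nodup_cons, List.mem_cons]
      refine ⟨?_, ?_, by simp⟩
      · push_neg
        exact ⟨fun h => hza h.symm, haceq, by simp⟩
      · push_neg
        exact ⟨hzc, by simp⟩
    · intro v hv
      simp only [List.mem_cons, List.not_mem_nil, or_false] at hv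
      rcases hv with rfl | rfl | rfl
      · exact (S.A_sub _ hac).1
      · exact hz
      · exact (S.A_sub _ hac).2
    · refine List.isChain_cons_cons.2 ⟨⟨h1, fun h => hza h.symm⟩, ?_⟩
      exact List.isChain_cons_cons.2 ⟨⟨h2, hzc⟩, List.isChain_singleton c⟩

/-! ### Upper bound -/

lemma upper_bound (S G : Dgraph) (hSt : S.MemTa) (hSred : NoTwoStep S) (k : ℕ) :
    (Hom (Gk G k) S).ncard ≤
      (SHom G S).ncard * 2 ^ (G.Astar.card * k)
      + (Hom G S).ncard * 2 ^ ((G.Astar.card - 1) * k) := by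
  classical
  rw [Set.ncard_eq_toFinset_card _ (hom_finite (Gk G k) S),
    Set.ncard_eq_toFinset_card _ (shom_finite G S),
    Set.ncard_eq_toFinset_card _ (hom_finite G S)]
  set HkF := (hom_finite (Gk G k) S).toFinset with hHkF
  set HF := (hom_finite G S).toFinset with hHF
  set SF := (shom_finite G S).toFinset with hSF
  have hre : ∀ ζ ∈ HkF, restrict G.V ζ ∈ HF := by
    intro ζ hζ
    rw [hHkF, Set.Finite.mem_toFinset] at hζ
    obtain ⟨h1, h2, h3⟩ := hζ
    rw [hHF, Set.Finite.mem_toFinset]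
    refine ⟨?_, ?_, ?_⟩
    · intro v hv
      simp only [restrict, if_pos hv]
      exact h1 v (Finset.mem_union_left _ hv)
    · intro p hp
      simp only [restrict, if_pos (G.A_sub _ hp).1, if_pos (G.A_sub _ hp).2]
      exact h2 p (arcA_mem_Gk hp)
    · intro v hv
      simp only [restrict, if_neg hv]
  rw [Finset.card_eq_sum_card_fiberwise hre]
  -- the per-fiber bound
  have hfib : ∀ ξ ∈ HF, (HkF.filter (fun ζ => restrict G.V ζ = ξ)).card ≤
      (if (∀ p ∈ G.Astar, ξ p.1 ≠ ξ p.2) then 2 ^ (G.Astar.card * k)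
        else 2 ^ ((G.Astar.card - 1) * k)) := by
    intro ξ hξ
    rw [hHF, Set.Finite.mem_toFinset] at hξ
    -- facts about members of the fiber
    have hval : ∀ ζ ∈ HkF.filter (fun ζ => restrict G.V ζ = ξ),
        (∀ v ∈ G.V, ζ v = ξ v) ∧
        (∀ q ∈ Arcs G k, ζ (enc G q) = ξ q.1.1 ∨ ζ (enc G q) = ξ q.1.2) ∧
        (∀ x, x ∉ (Gk G k).V → ζ x = 0) := by
      intro ζ hζ
      rw [Finset.mem_filter, hHkF, Set.Finite.mem_toFinset] at hζ
      obtain ⟨⟨h1, h2, h3⟩, hres⟩ := hζ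
      have hζξ : ∀ v ∈ G.V, ζ v = ξ v := by
        intro v hv
        have := congrFun hres v
        simp only [restrict, if_pos hv] at this
        exact this
      refine ⟨hζξ, ?_, h3⟩
      intro q hq
      have hac : (ξ q.1.1, ξ q.1.2) ∈ S.A := hξ.2.1 q.1 (arc_mem_A hq)
      have hz : ζ (enc G q) ∈ S.V := h1 _ (Finset.mem_union_right _ (enc_mem_Mid hq))
      have ha1 : (ζ q.1.1, ζ (enc G q)) ∈ S.A := h2 _ (arc2_mem_Gk hq)
      have ha2 : (ζ (enc G q), ζ q.1.2) ∈ S.A := h2 _ (arc3_mem_Gk hq)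
      rw [hζξ _ (arc_fst_mem_V hq)] at ha1
      rw [hζξ _ (arc_snd_mem_V hq)] at ha2
      rcases mem_pair hSt hSred hac hz ha1 ha2 with h | h
      · exact Or.inl h
      · exact Or.inr h
    -- the coding map is injective on the fiber
    have hinj : Set.InjOn (fun ζ : ℕ → ℕ => (Arcs G k).filter (fun q => ζ (enc G q) ≠ ξ q.1.1))
        ↑(HkF.filter (fun ζ => restrict G.V ζ = ξ)) := by
      intro ζ₁ hζ₁ ζ₂ hζ₂ heq
      simp only [Finset.coe_filter, Set.mem_setOf_eq] at hζ₁ hζ₂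
      have hm₁ := hval ζ₁ (Finset.mem_filter.2 hζ₁)
      have hm₂ := hval ζ₂ (Finset.mem_filter.2 hζ₂)
      funext x
      by_cases hx : x ∈ G.V
      · rw [hm₁.1 x hx, hm₂.1 x hx]
      · by_cases hx2 : x ∈ Mid G k
        · obtain ⟨q, hq, rfl⟩ := Finset.mem_image.1 hx2
          have hq1 := hm₁.2.1 q hq
          have hq2 := hm₂.2.1 q hq
          have heq' : (Arcs G k).filter (fun q => ζ₁ (enc G q) ≠ ξ q.1.1)
              = (Arcs G k).filter (fun q => ζ₂ (enc G q) ≠ ξ q.1.1) := heq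
          have hcodes : (q ∈ (Arcs G k).filter (fun q => ζ₁ (enc G q) ≠ ξ q.1.1)) ↔
              (q ∈ (Arcs G k).filter (fun q => ζ₂ (enc G q) ≠ ξ q.1.1)) := by rw [heq']
          simp only [Finset.mem_filter, hq, true_and] at hcodes
          by_cases hc : ζ₁ (enc G q) = ξ q.1.1
          · have hc2 : ζ₂ (enc G q) = ξ q.1.1 := by
              by_contra hcon
              exact hcodes.2 hcon hc
            rw [hc, hc2]
          · have hc2 : ζ₂ (enc G q) ≠ ξ q.1.1 := hcodes.1 hc
            rcases hq1 with h | h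
            · exact absurd h hc
            · rcases hq2 with h' | h'
              · exact absurd h' hc2
              · rw [h, h']
        · have hxV : x ∉ (Gk G k).V := by
            rw [Gk_V, Finset.mem_union]
            push_neg
            exact ⟨hx, hx2⟩
          rw [hm₁.2.2 x hxV, hm₂.2.2 x hxV]
    by_cases hstrict : ∀ p ∈ G.Astar, ξ p.1 ≠ ξ p.2
    · rw [if_pos hstrict]
      have hmk : 2 ^ (G.Astar.card * k) = (Arcs G k).powerset.card := by
        rw [Finset.card_powerset, Arcs, Finset.card_product, Finset.card_range]
      rw [hmk]
      refine Finset.card_le_card_of_injOn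
        (fun ζ => (Arcs G k).filter (fun q => ζ (enc G q) ≠ ξ q.1.1)) ?_ hinj
      intro ζ _
      exact Finset.mem_powerset.2 (Finset.filter_subset _ _)
    · rw [if_neg hstrict]
      push_neg at hstrict
      obtain ⟨p₀, hp₀, hp₀eq⟩ := hstrict
      have hmk : 2 ^ ((G.Astar.card - 1) * k)
          = ((G.Astar.erase p₀) ×ˢ Finset.range k).powerset.card := by
        rw [Finset.card_powerset, Finset.card_product, Finset.card_range,
          Finset.card_erase_of_mem hp₀]
      rw [hmk]
      refine Finset.card_le_card_of_injOn
        (fun ζ => (Arcs G k).filter (fun q => ζ (enc G q) ≠ ξ q.1.1)) ?_ hinj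
      intro ζ hζ
      refine Finset.mem_powerset.2 ?_
      intro q hq
      rw [Finset.mem_filter] at hq
      obtain ⟨hqA, hqne⟩ := hq
      rw [Finset.mem_product]
      refine ⟨Finset.mem_erase.2 ⟨?_, (Finset.mem_product.1 hqA).1⟩,
        (Finset.mem_product.1 hqA).2⟩
      intro hq1
      have := (hval ζ hζ).2.1 q hqA
      rcases this with h | h
      · exact hqne h
      · apply hqne
        rw [h, hq1, hp₀eq]
  -- put the bounds together
  calc ∑ ξ ∈ HF, (HkF.filter (fun ζ => restrict G.V ζ = ξ)).card
      ≤ ∑ ξ ∈ HF, (if (∀ p ∈ G.Astar, ξ p.1 ≠ ξ p.2) then 2 ^ (G.Astar.card * k)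
          else 2 ^ ((G.Astar.card - 1) * k)) := Finset.sum_le_sum hfib
    _ = (HF.filter (fun ξ => ∀ p ∈ G.Astar, ξ p.1 ≠ ξ p.2)).card * 2 ^ (G.Astar.card * k)
        + (HF.filter (fun ξ => ¬ ∀ p ∈ G.Astar, ξ p.1 ≠ ξ p.2)).card
          * 2 ^ ((G.Astar.card - 1) * k) := by
        rw [Finset.sum_ite]
        simp [Finset.sum_const, Nat.smul_one_eq_cast, mul_comm]
    _ ≤ SF.card * 2 ^ (G.Astar.card * k) + HF.card * 2 ^ ((G.Astar.card - 1) * k) := by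
        refine Nat.add_le_add (Nat.mul_le_mul_right _ ?_) (Nat.mul_le_mul_right _ ?_)
        · refine Finset.card_le_card ?_
          intro ξ hξ
          rw [Finset.mem_filter, hHF, Set.Finite.mem_toFinset] at hξ
          rw [hSF, Set.Finite.mem_toFinset]
          exact ⟨hξ.1, hξ.2⟩
        · exact Finset.card_le_card (Finset.filter_subset _ _)

end StrictAux

open StrictAux in
theorem stmt_0 (R S : Dgraph) (hRt : R.MemTa) (hSt : S.MemTa)
    (hRr : R.IsRefl) (hSr : S.IsRefl)
    (hRred : NoTwoStep R) (hSred : NoTwoStep S)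
    (hHom : ∀ G : Dgraph, G.MemTa → (Hom G R).ncard ≤ (Hom G S).ncard) :
    ∀ G : Dgraph, G.MemTa → (SHom G S).Nonempty →
      (SHom G R).ncard ≤ (SHom G S).ncard := by
  intro G hGt _hSne
  classical
  by_cases hm0 : G.Astar = ∅
  · have e : ∀ H : Dgraph, SHom G H = Hom G H := by
      intro H
      ext f
      constructor
      · exact fun hf => hf.1
      · intro hf
        refine ⟨hf, ?_⟩
        intro p hp
        rw [hm0] at hp
        exact absurd hp (Finset.notMem_empty p)
    rw [e R, e S]
    exact hHom G hGt
  · have hm1 : 1 ≤ G.Astar.card :=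
      Finset.card_pos.2 (Finset.nonempty_of_ne_empty hm0)
    set m := G.Astar.card with hm
    set h := (Hom G S).ncard with hh
    set k := h + 1 with hkdef
    have hk : h < 2 ^ k := lt_trans (Nat.lt_succ_self h) (Nat.lt_two_pow_self (n := h + 1))
    have L := lower_bound R G hRr k
    have U := upper_bound S G hSt hSred k
    have M := hHom (Gk G k) (gk_memTa G hGt k)
    have key : (SHom G R).ncard * 2 ^ (m * k) ≤
        (SHom G S).ncard * 2 ^ (m * k) + h * 2 ^ ((m - 1) * k) :=
      le_trans L (le_trans M U)
    by_contra hcon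
    push_neg at hcon
    have h1 : (SHom G S).ncard + 1 ≤ (SHom G R).ncard := hcon
    have e2 : 2 ^ (m * k) = 2 ^ ((m - 1) * k) * 2 ^ k := by
      rw [← pow_add]
      congr 1
      have hm' : m = (m - 1) + 1 := by omega
      calc m * k = ((m - 1) + 1) * k := by rw [← hm']
        _ = (m - 1) * k + k := by ring
    set X := 2 ^ ((m - 1) * k) with hX
    have hXpos : 0 < X := pow_pos (by norm_num) _
    rw [e2] at key
    have k1 : ((G.SHom S).ncard + 1) * (X * 2 ^ k) ≤
        (G.SHom S).ncard * (X * 2 ^ k) + h * X :=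
      le_trans (Nat.mul_le_mul_right _ h1) key
    rw [add_mul, one_mul] at k1
    have k2 : X * 2 ^ k ≤ h * X := le_of_add_le_add_left k1
    have k3 : 2 ^ k * X ≤ h * X := by rwa [mul_comm] at k2
    have k4 : 2 ^ k ≤ h := Nat.le_of_mul_le_mul_right k3 hXpos
    exact absurd k4 (not_le.2 hk)
end

section
/- Let R, S ∈ 𝕽 with h_R = h_S = n ≥ 1. (i) If #𝓗(G,R) ≤ #𝓗(G,S) for every G ∈ 𝔗_a, then #𝓢(G,R) ≤ #𝓢(G,S) for every G ∈ 𝔗_a^{=n} with 𝓢(G,S) ≠ ∅. (ii) If #𝓗(G,R) ≤ #𝓗(G,S) for every finite poset G, then #𝓢(G,R) ≤ #𝓢(G,S) for every poset G ∈ 𝔗_a^{=n}. -/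
open Dgraph

namespace Dgraph
open List

noncomputable section

/-- list of the m+1 values u 0, ..., u m -/
def mkl (u : ℕ → ℕ) (m : ℕ) : List ℕ := (List.range (m+1)).map u

lemma mkl_length (u : ℕ → ℕ) (m : ℕ) : (mkl u m).length = m + 1 := by simp [mkl]

lemma mkl_ne_nil (u : ℕ → ℕ) (m : ℕ) : mkl u m ≠ [] := by
  intro h
  have := mkl_length u m
  rw [h] at this; simp at this

lemma mkl_getElem (u : ℕ → ℕ) (m i : ℕ) (h : i < m + 1) :
    (mkl u m)[i]'(by rw [mkl_length]; exact h) = u i := by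
  simp [mkl]

lemma mkl_getD (u : ℕ → ℕ) (m i : ℕ) (h : i ≤ m) : (mkl u m).getD i 0 = u i := by
  rw [List.getD_eq_getElem _ _ (by rw [mkl_length]; omega)]
  exact mkl_getElem u m i (by omega)

lemma mem_mkl {u : ℕ → ℕ} {m v : ℕ} : v ∈ mkl u m ↔ ∃ i ≤ m, u i = v := by
  simp [mkl, Nat.lt_succ_iff]

lemma mkl_head? (u : ℕ → ℕ) (m : ℕ) : (mkl u m).head? = some (u 0) := by
  simp [mkl, List.range_succ_eq_map]

lemma mkl_getLast? (u : ℕ → ℕ) (m : ℕ) : (mkl u m).getLast? = some (u m) := by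
  rw [mkl, List.getLast?_map, List.range_succ, List.getLast?_concat]; rfl

lemma chain'_iff_get_aux {R : ℕ → ℕ → Prop} {l : List ℕ} :
    l.Chain' R ↔ ∀ (i : ℕ) (h : i < l.length - 1),
      R (l.get ⟨i, by omega⟩) (l.get ⟨i + 1, by omega⟩) := by
  simp only [List.Chain', List.isChain_iff_getElem, List.get_eq_getElem]
  constructor
  · intro h i hi; exact h i (by omega)
  · intro h i hi; exact h i (by omega)

lemma mkl_chain' {R : ℕ → ℕ → Prop} {u : ℕ → ℕ} {m : ℕ} :
    (mkl u m).Chain' R ↔ ∀ i < m, R (u i) (u (i+1)) := by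
  rw [chain'_iff_get_aux]
  constructor
  · intro h i hi
    have := h i (by rw [mkl_length]; omega)
    simpa [List.get_eq_getElem, mkl_getElem u m i (by omega), mkl_getElem u m (i+1) (by omega)]
      using this
  · intro h i hi
    rw [mkl_length] at hi
    simp only [List.get_eq_getElem]
    rw [mkl_getElem u m i (by omega), mkl_getElem u m (i+1) (by omega)]
    exact h i (by omega)

lemma mkl_nodup {u : ℕ → ℕ} {m : ℕ} (h : ∀ i ≤ m, ∀ j ≤ m, u i = u j → i = j) :
    (mkl u m).Nodup := by
  rw [List.nodup_iff_injective_get]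
  intro ⟨i, hi⟩ ⟨j, hj⟩ hij
  rw [mkl_length] at hi hj
  simp only [List.get_eq_getElem, mkl_getElem u m i (by omega), mkl_getElem u m j (by omega)] at hij
  exact Fin.ext (h i (by omega) j (by omega) hij)

/-- A closed walk of proper arcs yields a contradiction with `MemTa`. -/
lemma cw {G : Dgraph} (hG : G.MemTa) (u : ℕ → ℕ) (m : ℕ) (hm : 1 ≤ m)
    (hV : ∀ i ≤ m, u i ∈ G.V) (hA : ∀ i < m, (u i, u (i+1)) ∈ G.A ∧ u i ≠ u (i+1))
    (hc : u 0 = u m) : False := by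
  apply hG
  refine ⟨mkl u m, ?_, mkl_chain'.2 hA, ?_, ?_⟩
  · intro v hv
    obtain ⟨i, hi, rfl⟩ := mem_mkl.1 hv
    exact hV i hi
  · rw [mkl_length]; omega
  · rw [mkl_head?, mkl_getLast?, hc]

/-- In a `MemTa` digraph, a walk of proper arcs has pairwise distinct vertices. -/
lemma walk_inj {G : Dgraph} (hG : G.MemTa) (u : ℕ → ℕ) (m : ℕ)
    (hV : ∀ i ≤ m, u i ∈ G.V) (hA : ∀ i < m, (u i, u (i+1)) ∈ G.A ∧ u i ≠ u (i+1)) :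
    ∀ i ≤ m, ∀ j ≤ m, u i = u j → i = j := by
  have key : ∀ i j, i < j → j ≤ m → u i = u j → False := by
    intro i j hij hj he
    refine cw hG (fun s => u (i + s)) (j - i) (by omega)
      (fun s hs => hV (i+s) (by omega)) (fun s hs => ?_) ?_
    · show (u (i+s), u (i + (s+1))) ∈ G.A ∧ u (i+s) ≠ u (i + (s+1))
      have h2 : i + (s + 1) = i + s + 1 := by omega
      rw [h2]
      exact hA (i+s) (by omega)
    · show u (i + 0) = u (i + (j - i))
      have h3 : i + (j - i) = j := by omega
      rw [h3]; simpa using he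
  intro i hi j hj he
  rcases Nat.lt_trichotomy i j with h | h | h
  · exact absurd he (fun he => key i j h hj he)
  · exact h
  · exact absurd he.symm (fun he => key j i h hi he)

/-- Function version of a path. -/
def FPath (G : Dgraph) (u : ℕ → ℕ) (m : ℕ) : Prop :=
  (∀ i ≤ m, u i ∈ G.V) ∧ (∀ i < m, (u i, u (i+1)) ∈ G.A) ∧
    (∀ i ≤ m, ∀ j ≤ m, u i = u j → i = j)

lemma FPath.isPath_mkl {G : Dgraph} {u : ℕ → ℕ} {m : ℕ} (h : G.FPath u m) :
    G.IsPath (mkl u m) := by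
  refine ⟨mkl_ne_nil u m, mkl_nodup h.2.2, ?_, mkl_chain'.2 (fun i hi => h.2.1 i hi)⟩
  intro v hv
  obtain ⟨i, hi, rfl⟩ := mem_mkl.1 hv
  exact h.1 i hi

/-- build an `FPath` from proper arcs via `walk_inj`. -/
lemma fpath_of_proper {G : Dgraph} (hG : G.MemTa) {u : ℕ → ℕ} {m : ℕ}
    (hV : ∀ i ≤ m, u i ∈ G.V) (hA : ∀ i < m, (u i, u (i+1)) ∈ G.A ∧ u i ≠ u (i+1)) :
    G.FPath u m :=
  ⟨hV, fun i hi => (hA i hi).1, walk_inj hG u m hV hA⟩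

lemma isPath_fpath {G : Dgraph} {l : List ℕ} (hl : G.IsPath l) :
    G.FPath (fun i => l.getD i 0) (l.length - 1) := by
  obtain ⟨hne, hnd, hV, hc⟩ := hl
  have hlen : 1 ≤ l.length := List.length_pos_iff.2 hne
  refine ⟨?_, ?_, ?_⟩
  · intro i hi
    show l.getD i 0 ∈ G.V
    apply hV
    rw [List.getD_eq_getElem _ _ (by omega)]
    exact List.getElem_mem _
  · intro i hi
    show (l.getD i 0, l.getD (i+1) 0) ∈ G.A
    rw [chain'_iff_get_aux] at hc
    have h1 := hc i (by omega)
    rw [List.getD_eq_getElem _ _ (show i < l.length by omega),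
      List.getD_eq_getElem _ _ (show i+1 < l.length by omega)]
    simpa [List.get_eq_getElem] using h1
  · intro i hi j hj he
    simp only at he
    rw [List.getD_eq_getElem _ _ (show i < l.length by omega)] at he
    rw [List.getD_eq_getElem _ _ (show j < l.length by omega)] at he
    exact (List.Nodup.getElem_inj_iff hnd).1 he

lemma height_bddAbove (G : Dgraph) :
    BddAbove {n | ∃ p, G.IsPath p ∧ p.length = n + 1} := by
  refine ⟨G.V.card, ?_⟩
  rintro m ⟨p, hp, hlen⟩
  have h1 : p.toFinset ⊆ G.V := by
    intro v hv; exact hp.2.2.1 v (List.mem_toFinset.1 hv)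
  have h2 : p.toFinset.card = p.length := List.toFinset_card_of_nodup hp.2.1
  have := Finset.card_le_card h1
  omega

lemma fpath_le_height {G : Dgraph} {u : ℕ → ℕ} {m : ℕ} (h : G.FPath u m) :
    m ≤ G.height :=
  le_csSup (height_bddAbove G) ⟨mkl u m, h.isPath_mkl, mkl_length u m⟩

lemma height_attained (G : Dgraph) : ∃ u, G.FPath u G.height := by
  have hne : {n | ∃ p, G.IsPath p ∧ p.length = n + 1}.Nonempty := by
    obtain ⟨v, hv⟩ := G.nonempty
    exact ⟨0, [v], ⟨by simp, by simp, by simpa, List.isChain_singleton v⟩, rfl⟩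
  have := Nat.sSup_mem hne (height_bddAbove G)
  obtain ⟨p, hp, hlen⟩ := this
  refine ⟨(fun i => p.getD i 0), ?_⟩
  have := isPath_fpath hp
  rw [hlen] at this
  simpa [height] using this

end
end Dgraph
namespace Dgraph
noncomputable section

/-- rank: maximal length of a star-walk (proper-arc walk) ending at `v`. -/
def rk (G : Dgraph) (v : ℕ) : ℕ :=
  sSup {m | ∃ u : ℕ → ℕ, (∀ i ≤ m, u i ∈ G.V) ∧
    (∀ i < m, (u i, u (i+1)) ∈ G.A ∧ u i ≠ u (i+1)) ∧ u m = v}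

lemma rk_bddAbove {G : Dgraph} (hG : G.MemTa) (v : ℕ) :
    BddAbove {m | ∃ u : ℕ → ℕ, (∀ i ≤ m, u i ∈ G.V) ∧
      (∀ i < m, (u i, u (i+1)) ∈ G.A ∧ u i ≠ u (i+1)) ∧ u m = v} := by
  refine ⟨G.V.card, ?_⟩
  rintro m ⟨u, hV, hA, _⟩
  have h := fpath_of_proper hG hV hA
  have := fpath_le_height h
  have h2 := height_bddAbove G
  -- directly: m ≤ G.V.card via the FPath nodup list
  have h1 : (mkl u m).toFinset ⊆ G.V := by
    intro x hx
    obtain ⟨i, hi, rfl⟩ := mem_mkl.1 (List.mem_toFinset.1 hx)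
    exact hV i hi
  have h2' : (mkl u m).toFinset.card = m + 1 := by
    rw [List.toFinset_card_of_nodup (mkl_nodup h.2.2), mkl_length]
  have := Finset.card_le_card h1
  omega

lemma rk_lt {G : Dgraph} (hG : G.MemTa) {v w : ℕ} (hvw : (v, w) ∈ G.A) (hne : v ≠ w) :
    G.rk v < G.rk w := by
  have hv : v ∈ G.V := (G.A_sub _ hvw).1
  have hw : w ∈ G.V := (G.A_sub _ hvw).2
  have hne' : {m | ∃ u : ℕ → ℕ, (∀ i ≤ m, u i ∈ G.V) ∧
      (∀ i < m, (u i, u (i+1)) ∈ G.A ∧ u i ≠ u (i+1)) ∧ u m = v}.Nonempty :=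
    ⟨0, fun _ => v, fun i _ => hv, fun i hi => absurd hi (by omega), rfl⟩
  obtain ⟨u, hV, hA, hlast⟩ := Nat.sSup_mem hne' (rk_bddAbove hG v)
  rw [show sSup {m | ∃ u : ℕ → ℕ, (∀ i ≤ m, u i ∈ G.V) ∧
      (∀ i < m, (u i, u (i+1)) ∈ G.A ∧ u i ≠ u (i+1)) ∧ u m = v} = G.rk v from rfl] at hV hA hlast
  obtain ⟨r, hr⟩ : ∃ r, G.rk v = r := ⟨_, rfl⟩
  rw [hr] at hV hA hlast ⊢
  have hstep : r + 1 ∈ {m | ∃ u : ℕ → ℕ, (∀ i ≤ m, u i ∈ G.V) ∧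
      (∀ i < m, (u i, u (i+1)) ∈ G.A ∧ u i ≠ u (i+1)) ∧ u m = w} := by
    refine ⟨fun i => if i ≤ r then u i else w, ?_, ?_, ?_⟩
    · intro i hi
      show (if i ≤ r then u i else w) ∈ G.V
      by_cases h : i ≤ r
      · rw [if_pos h]; exact hV i h
      · rw [if_neg h]; exact hw
    · intro i hi
      show ((if i ≤ r then u i else w), (if i + 1 ≤ r then u (i+1) else w)) ∈ G.A ∧
        (if i ≤ r then u i else w) ≠ (if i + 1 ≤ r then u (i+1) else w)
      by_cases h : i < r
      · rw [if_pos (show i ≤ r by omega), if_pos (show i + 1 ≤ r by omega)]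
        exact hA i h
      · have h1 : i = r := by omega
        rw [if_pos (show i ≤ r by omega), if_neg (show ¬ (i + 1 ≤ r) by omega)]
        rw [h1, hlast]
        exact ⟨hvw, hne⟩
    · show (if r + 1 ≤ r then u (r + 1) else w) = w
      rw [if_neg (by omega)]
  have h5 := le_csSup (rk_bddAbove hG w) hstep
  exact Nat.lt_of_lt_of_le (Nat.lt_succ_self r) h5

/-- a digraph admitting a rank function strictly increasing along proper arcs is in `𝔗ₐ`. -/
lemma memTa_of_rank (D : Dgraph) (ρ : ℕ → ℕ)
    (h : ∀ x y, (x, y) ∈ D.A → x ≠ y → ρ x < ρ y) : D.MemTa := by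
  rintro ⟨p, hV, hc, hlen, hh⟩
  set m := p.length - 1 with hm
  have hm1 : 1 ≤ m := by omega
  have harc : ∀ i < m, (p.getD i 0, p.getD (i+1) 0) ∈ D.A ∧ p.getD i 0 ≠ p.getD (i+1) 0 := by
    intro i hi
    rw [chain'_iff_get_aux] at hc
    have h1 := hc i (by omega)
    rw [List.getD_eq_getElem _ _ (show i < p.length by omega),
      List.getD_eq_getElem _ _ (show i+1 < p.length by omega)]
    simpa [List.get_eq_getElem] using h1
  have hmono : ∀ s ≤ m, ρ (p.getD 0 0) + s ≤ ρ (p.getD s 0) := by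
    intro s hs
    induction s with
    | zero => simp
    | succ t ih =>
      have h1 := ih (by omega)
      have h2 := harc t (by omega)
      have := h _ _ h2.1 h2.2
      omega
  have hends : p.getD 0 0 = p.getD m 0 := by
    rw [List.head?_eq_getElem?, List.getLast?_eq_getElem?] at hh
    rw [List.getElem?_eq_getElem (show 0 < p.length by omega)] at hh
    rw [List.getElem?_eq_getElem (show p.length - 1 < p.length by omega)] at hh
    rw [List.getD_eq_getElem _ _ (show 0 < p.length by omega),
      List.getD_eq_getElem _ _ (show m < p.length by omega)]
    simpa [hm] using hh
  have := hmono m (le_refl m)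
  rw [← hends] at this
  omega

section iotaLemmas

variable {H : Dgraph}

lemma mem_interval {a b z : ℕ} :
    z ∈ H.interval a b ↔ z ∈ H.V ∧ (a, z) ∈ H.A ∧ (z, b) ∈ H.A := by
  simp [interval]

lemma right_mem_interval (hrefl : H.IsRefl) {a b : ℕ} (h : (a, b) ∈ H.A) :
    b ∈ H.interval a b := by
  have hb : b ∈ H.V := (H.A_sub _ h).2
  exact mem_interval.2 ⟨hb, h, hrefl b hb⟩

lemma left_mem_interval (hrefl : H.IsRefl) {a b : ℕ} (h : (a, b) ∈ H.A) :
    a ∈ H.interval a b := by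
  have ha : a ∈ H.V := (H.A_sub _ h).1
  exact mem_interval.2 ⟨ha, hrefl a ha, h⟩

lemma iota_pos (hrefl : H.IsRefl) {a b : ℕ} (h : (a, b) ∈ H.A) : 1 ≤ H.iota a b :=
  Finset.card_pos.2 ⟨b, right_mem_interval hrefl h⟩

lemma interval_self (hG : H.MemTa) (hrefl : H.IsRefl) {x : ℕ} (hx : x ∈ H.V) :
    H.interval x x = {x} := by
  ext z
  simp only [mem_interval, Finset.mem_singleton]
  constructor
  · rintro ⟨hz, h1, h2⟩
    by_contra hne
    refine cw hG (fun i => if i = 1 then z else x) 2 (by omega)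
      (fun i hi => by
        show (if i = 1 then z else x) ∈ H.V
        by_cases h : i = 1
        · rw [if_pos h]; exact hz
        · rw [if_neg h]; exact hx)
      (fun i hi => ?_) (by norm_num)
    show ((if i = 1 then z else x), (if i + 1 = 1 then z else x)) ∈ H.A ∧
      (if i = 1 then z else x) ≠ (if i + 1 = 1 then z else x)
    by_cases h : i = 1
    · rw [if_pos h, if_neg (by omega)]
      exact ⟨h2, hne⟩
    · have h0 : i = 0 := by omega
      rw [if_neg h, if_pos (by omega)]
      exact ⟨h1, fun he => hne he.symm⟩
  · rintro rfl
    exact ⟨hx, hrefl _ hx, hrefl _ hx⟩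

lemma iota_self (hG : H.MemTa) (hrefl : H.IsRefl) {x : ℕ} (hx : x ∈ H.V) :
    H.iota x x = 1 := by
  rw [iota, interval_self hG hrefl hx]; simp

/-- The interval of an arc lying on a path of maximal length is just the pair of endpoints. -/
lemma interval_pair (hG : H.MemTa) (hrefl : H.IsRefl) {u : ℕ → ℕ}
    (hp : H.FPath u H.height) {i : ℕ} (hi : i < H.height) :
    H.interval (u i) (u (i+1)) = {u i, u (i+1)} := by
  obtain ⟨hV, hA, hinj⟩ := hp
  set n := H.height with hn
  ext z
  simp only [mem_interval, Finset.mem_insert, Finset.mem_singleton]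
  constructor
  · rintro ⟨hz, h1, h2⟩
    by_contra hne
    push_neg at hne
    obtain ⟨hne1, hne2⟩ := hne
    by_cases hzin : ∃ j ≤ n, u j = z
    · obtain ⟨j, hj, rfl⟩ := hzin
      rcases Nat.lt_trichotomy j i with h | h | h
      · -- closed walk u j, u (j+1), ..., u i, z=u j
        exact cw hG (fun s => if s ≤ i - j then u (j + s) else u j) (i - j + 1) (by omega)
          (fun s hs => by
            by_cases h' : s ≤ i - j <;> simp [h']
            · exact hV _ (by omega)
            · exact hV _ (by omega))
          (fun s hs => by
            by_cases h' : s < i - j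
            · have e1 : s ≤ i - j := by omega
              have e2 : s + 1 ≤ i - j := by omega
              simp only [e1, e2, if_true]
              have h3 : j + (s+1) = j + s + 1 := by omega
              rw [h3]
              refine ⟨(hA (j+s) (by omega)), fun he => ?_⟩
              have := hinj (j+s) (by omega) (j+s+1) (by omega) he
              omega
            · have e1 : s = i - j := by omega
              subst e1
              have e2 : i - j ≤ i - j := le_refl _
              have e3 : ¬ (i - j + 1 ≤ i - j) := by omega
              simp only [e2, if_true, e3, if_false]
              have h4 : j + (i - j) = i := by omega
              rw [h4]
              exact ⟨h1, fun he => by have := hinj j (by omega) i (by omega) he.symm; omega⟩)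
          (by simp)
      · exact hne1 (by rw [← h])
      · rcases Nat.lt_or_ge (i+1) j with h' | h'
        · -- closed walk u (i+1), ..., u j = z, then arc z -> u (i+1)
          exact cw hG (fun s => if s ≤ j - (i+1) then u (i + 1 + s) else u (i+1))
            (j - (i+1) + 1) (by omega)
            (fun s hs => by
              by_cases h'' : s ≤ j - (i+1) <;> simp [h'']
              · exact hV _ (by omega)
              · exact hV _ (by omega))
            (fun s hs => by
              by_cases h'' : s < j - (i+1)
              · have e1 : s ≤ j - (i+1) := by omega
                have e2 : s + 1 ≤ j - (i+1) := by omega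
                simp only [e1, e2, if_true]
                have h3 : i + 1 + (s+1) = i + 1 + s + 1 := by omega
                rw [h3]
                refine ⟨hA (i+1+s) (by omega), fun he => ?_⟩
                have := hinj (i+1+s) (by omega) (i+1+s+1) (by omega) he
                omega
              · have e1 : s = j - (i+1) := by omega
                subst e1
                have e3 : ¬ (j - (i+1) + 1 ≤ j - (i+1)) := by omega
                simp only [le_refl, if_true, e3, if_false]
                have h4 : i + 1 + (j - (i+1)) = j := by omega
                rw [h4]
                exact ⟨h2, fun he => by have := hinj j (by omega) (i+1) (by omega) he; omega⟩)
            (by simp)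
        · have : j = i + 1 := by omega
          exact hne2 (by rw [← this])
    · -- z is fresh: splice it in to get a longer path
      push_neg at hzin
      have : H.FPath (fun s => if s ≤ i then u s else if s = i + 1 then z else u (s - 1)) (n + 1) := by
        apply fpath_of_proper hG
        · intro s hs
          by_cases h1' : s ≤ i
          · simpa [h1'] using hV s (by omega)
          · by_cases h2' : s = i + 1
            · simp [h1', h2', hz]
            · simp only [h1', h2', if_false]
              exact hV (s-1) (by omega)
        · intro s hs
          by_cases h1' : s < i
          · have e1 : s ≤ i := by omega
            have e2 : s + 1 ≤ i := by omega
            simp only [e1, e2, if_true]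
            refine ⟨hA s (by omega), fun he => ?_⟩
            have := hinj s (by omega) (s+1) (by omega) he
            omega
          · by_cases h2' : s = i
            · subst h2'
              have e3 : ¬ (s + 1 ≤ s) := by omega
              simp only [le_refl, if_true, e3, if_false, if_pos rfl]
              exact ⟨h1, fun he => hzin s (by omega) he⟩
            · by_cases h3' : s = i + 1
              · subst h3'
                have e1 : ¬ (i + 1 ≤ i) := by omega
                have e2 : ¬ (i + 1 + 1 ≤ i) := by omega
                have e3 : ¬ (i + 1 + 1 = i + 1) := by omega
                simp only [e1, e2, e3, if_false, if_pos rfl]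
                have h4 : i + 1 + 1 - 1 = i + 1 := by omega
                rw [h4]
                exact ⟨h2, fun he => hzin (i+1) (by omega) he.symm⟩
              · have e1 : ¬ (s ≤ i) := by omega
                have e2 : ¬ (s + 1 ≤ i) := by omega
                have e4 : ¬ (s + 1 = i + 1) := by omega
                simp only [e1, e2, h3', e4, if_false]
                have h5 : s + 1 - 1 = s - 1 + 1 := by omega
                rw [h5]
                refine ⟨hA (s-1) (by omega), fun he => ?_⟩
                have := hinj (s-1) (by omega) (s-1+1) (by omega) he
                omega
      have := fpath_le_height this
      omega
  · rintro (rfl | rfl)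
    · exact ⟨hV i (by omega), hrefl _ (hV i (by omega)), hA i hi⟩
    · exact ⟨hV (i+1) (by omega), hA i hi, hrefl _ (hV (i+1) (by omega))⟩

lemma iota_pair (hG : H.MemTa) (hrefl : H.IsRefl) {u : ℕ → ℕ}
    (hp : H.FPath u H.height) {i : ℕ} (hi : i < H.height) :
    H.iota (u i) (u (i+1)) = 2 := by
  rw [iota, interval_pair hG hrefl hp hi]
  rw [Finset.card_insert_of_notMem (by
    simp only [Finset.mem_singleton]
    intro he
    have := hp.2.2 i (by omega) (i+1) (by omega) he
    omega), Finset.card_singleton]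

end iotaLemmas
end
end Dgraph
namespace Dgraph
noncomputable section

lemma list_sum_map_range {M : Type*} [AddCommMonoid M] (m : ℕ) (g : ℕ → M) :
    ((List.range m).map g).sum = ∑ i ∈ Finset.range m, g i := by
  induction m with
  | zero => simp
  | succ k ih => rw [List.range_succ, Finset.sum_range_succ, List.map_append, List.sum_append, ih]; simp

lemma list_prod_map_range {M : Type*} [CommMonoid M] (m : ℕ) (g : ℕ → M) :
    ((List.range m).map g).prod = ∏ i ∈ Finset.range m, g i := by
  induction m with
  | zero => simp
  | succ k ih => rw [List.range_succ, Finset.prod_range_succ, List.map_append, List.prod_append, ih]; simp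

lemma zip_eq_map_range (u : ℕ → ℕ) (m : ℕ) :
    (mkl u m).zip (mkl u m).tail = (List.range m).map (fun i => (u i, u (i+1))) := by
  apply List.ext_getElem
  · simp [List.length_zip, mkl_length]
  · intro i h1 h2
    have hi : i < m := by simpa using h2
    rw [List.getElem_zip, List.getElem_map, List.getElem_range]
    rw [List.getElem_tail]
    have e1 : (mkl u m)[i]'(by rw [mkl_length]; omega) = u i := mkl_getElem u m i (by omega)
    have e2 : (mkl u m)[i+1]'(by rw [mkl_length]; omega) = u (i+1) := mkl_getElem u m (i+1) (by omega)
    rw [e1, e2]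

lemma arcs_nodup {u : ℕ → ℕ} {m : ℕ} (hinj : ∀ i ≤ m, ∀ j ≤ m, u i = u j → i = j) :
    ((List.range m).map (fun i => (u i, u (i+1)))).Nodup := by
  refine List.Nodup.map_on ?_ List.nodup_range
  intro i hi j hj he
  rw [List.mem_range] at hi hj
  have := congrArg Prod.fst he
  exact hinj i (by omega) j (by omega) this

lemma pathGraph_V (u : ℕ → ℕ) (m : ℕ) :
    (pathGraph (mkl u m) (mkl_ne_nil u m)).V = (mkl u m).toFinset := rfl

lemma pathGraph_A (u : ℕ → ℕ) (m : ℕ) :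
    (pathGraph (mkl u m) (mkl_ne_nil u m)).A
      = ((List.range m).map (fun i => (u i, u (i+1)))).toFinset := by
  show ((mkl u m).zip (mkl u m).tail).toFinset = _
  rw [zip_eq_map_range]

lemma pathGraph_Astar {u : ℕ → ℕ} {m : ℕ} (hinj : ∀ i ≤ m, ∀ j ≤ m, u i = u j → i = j) :
    (pathGraph (mkl u m) (mkl_ne_nil u m)).Astar
      = ((List.range m).map (fun i => (u i, u (i+1)))).toFinset := by
  rw [Astar, pathGraph_A]
  apply Finset.filter_true_of_mem
  intro p hp
  rw [List.mem_toFinset, List.mem_map] at hp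
  obtain ⟨i, hi, rfl⟩ := hp
  rw [List.mem_range] at hi
  intro he
  have := hinj i (by omega) (i+1) (by omega) he
  omega

lemma mu_pathGraph (H : Dgraph) {u : ℕ → ℕ} {m : ℕ}
    (hinj : ∀ i ≤ m, ∀ j ≤ m, u i = u j → i = j) (f : ℕ → ℕ) :
    mu (pathGraph (mkl u m) (mkl_ne_nil u m)) H f
      = ∑ i ∈ Finset.range m, H.iota (f (u i)) (f (u (i+1))) := by
  rw [mu, pathGraph_Astar hinj]
  rw [List.sum_toFinset _ (arcs_nodup hinj)]
  rw [List.map_map]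
  rw [list_sum_map_range]
  rfl

/-- the central walk bound coming from membership in `𝕽`. -/
lemma walk_sum_le {H : Dgraph} {n : ℕ} (hH : MemR H) (hh : H.height = n)
    (w : ℕ → ℕ) (hWV : ∀ i ≤ n, w i ∈ H.V) (hWA : ∀ i < n, (w i, w (i+1)) ∈ H.A) :
    ∑ i ∈ Finset.range n, H.iota (w i) (w (i+1)) ≤ 2 * n := by
  obtain ⟨hTa, hrefl, σ, hσ⟩ := hH
  obtain ⟨hσM, hσS⟩ := hσ
  obtain ⟨q, hq⟩ := height_attained H
  rw [hh] at hq
  have hqV := hq.1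
  have hqA := hq.2.1
  have hqinj := hq.2.2
  set L₀ := pathGraph (mkl q n) (mkl_ne_nil q n) with hL₀def
  have hL₀ : L₀ ∈ LSet H := by
    refine ⟨mkl q n, mkl_ne_nil q n, ?_, by rw [mkl_length, hh], rfl⟩
    have : H.FPath q n := hq
    exact this.isPath_mkl
  have hσ₀ : restrict L₀.V σ ∈ MSet L₀ H := hσM.2 L₀ hL₀
  -- the competitor homomorphism given by the walk w
  set ζ : ℕ → ℕ := fun x => if h : ∃ i, i ≤ n ∧ q i = x then w (Classical.choose h) else 0
    with hζdef
  have hζq : ∀ i ≤ n, ζ (q i) = w i := by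
    intro i hi
    have hex : ∃ j, j ≤ n ∧ q j = q i := ⟨i, hi, rfl⟩
    rw [hζdef]
    simp only [dif_pos hex]
    have hspec := Classical.choose_spec hex
    have := hqinj _ hspec.1 i hi hspec.2
    rw [this]
  have hmemV : ∀ x ∈ L₀.V, ∃ i ≤ n, q i = x := by
    intro x hx
    rw [hL₀def, pathGraph_V, List.mem_toFinset] at hx
    exact mem_mkl.1 hx
  have hζHom : ζ ∈ Hom L₀ H := by
    refine ⟨?_, ?_, ?_⟩
    · intro v hv
      obtain ⟨i, hi, rfl⟩ := hmemV v hv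
      rw [hζq i hi]
      exact hWV i hi
    · intro p hp
      rw [hL₀def, pathGraph_A, List.mem_toFinset, List.mem_map] at hp
      obtain ⟨i, hi, rfl⟩ := hp
      rw [List.mem_range] at hi
      show (ζ (q i), ζ (q (i+1))) ∈ H.A
      rw [hζq i (by omega), hζq (i+1) (by omega)]
      exact hWA i hi
    · intro v hv
      rw [hζdef]
      have : ¬ ∃ i, i ≤ n ∧ q i = v := by
        rintro ⟨i, hi, rfl⟩
        apply hv
        rw [hL₀def, pathGraph_V, List.mem_toFinset]
        exact mem_mkl.2 ⟨i, hi, rfl⟩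
      simp only [dif_neg this]
  have hle := hσ₀.2 ζ hζHom
  have hζmu : mu L₀ H ζ = ∑ i ∈ Finset.range n, H.iota (w i) (w (i+1)) := by
    rw [hL₀def, mu_pathGraph H hqinj ζ]
    apply Finset.sum_congr rfl
    intro i hi
    rw [Finset.mem_range] at hi
    rw [hζq i (by omega), hζq (i+1) (by omega)]
  have hσHomHH : σ ∈ Hom H H := hσS.1
  have hσq : H.FPath (fun i => σ (q i)) n := by
    apply fpath_of_proper hTa
    · intro i hi
      exact hσHomHH.1 _ (hqV i hi)
    · intro i hi
      constructor
      · exact hσHomHH.2.1 _ (hqA i hi)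
      · apply hσS.2 (q i, q (i+1))
        rw [Astar, Finset.mem_filter]
        refine ⟨hqA i hi, ?_⟩
        intro he
        have := hqinj i (by omega) (i+1) (by omega) he
        omega
  have hσmu : mu L₀ H (restrict L₀.V σ) = 2 * n := by
    rw [hL₀def, mu_pathGraph H hqinj]
    have : ∀ i ∈ Finset.range n,
        H.iota (restrict L₀.V σ (q i)) (restrict L₀.V σ (q (i+1))) = 2 := by
      intro i hi
      rw [Finset.mem_range] at hi
      have hq1 : q i ∈ L₀.V := by
        rw [hL₀def, pathGraph_V, List.mem_toFinset]; exact mem_mkl.2 ⟨i, by omega, rfl⟩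
      have hq2 : q (i+1) ∈ L₀.V := by
        rw [hL₀def, pathGraph_V, List.mem_toFinset]; exact mem_mkl.2 ⟨i+1, by omega, rfl⟩
      rw [restrict, if_pos hq1]
      rw [show restrict L₀.V σ (q (i+1)) = σ (q (i+1)) from if_pos hq2]
      have hp' : H.FPath (fun i => σ (q i)) H.height := by rw [hh]; exact hσq
      exact iota_pair hTa hrefl hp' (by rw [hh]; exact hi)
    rw [Finset.sum_congr rfl this, Finset.sum_const, Finset.card_range, smul_eq_mul]
    omega
  rw [hζmu, hσmu] at hle
  exact hle

end
end Dgraph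
namespace Dgraph
noncomputable section

lemma le_two_pow_pred {x : ℕ} (hx : 1 ≤ x) : x ≤ 2 ^ (x - 1) := by
  obtain ⟨m, rfl⟩ : ∃ m, x = m + 1 := ⟨x - 1, by omega⟩
  simp only [Nat.add_sub_cancel]
  clear hx
  induction m with
  | zero => simp
  | succ k ih =>
    have h2 : 2 ^ (k+1) = 2 * 2 ^ k := by ring
    omega

lemma le_two_pow_pred_sub {x : ℕ} (hx : 3 ≤ x) : x ≤ 2 ^ (x - 1) - 1 := by
  obtain ⟨m, rfl⟩ : ∃ m, x = m + 3 := ⟨x - 3, by omega⟩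
  clear hx
  induction m with
  | zero => simp
  | succ k ih =>
    have e : k + 1 + 3 - 1 = (k + 3 - 1) + 1 := by omega
    rw [e]
    have h2 : 2 ^ ((k + 3 - 1) + 1) = 2 * 2 ^ (k + 3 - 1) := by ring
    have h3 : 1 ≤ 2 ^ (k + 3 - 1) := Nat.one_le_two_pow
    omega

lemma prod_le_two_pow (s : Finset ℕ) (x : ℕ → ℕ) (h1 : ∀ i ∈ s, 1 ≤ x i) :
    ∏ i ∈ s, x i ≤ 2 ^ (∑ i ∈ s, (x i - 1)) := by
  calc ∏ i ∈ s, x i ≤ ∏ i ∈ s, 2 ^ (x i - 1) :=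
        Finset.prod_le_prod' (fun i hi => le_two_pow_pred (h1 i hi))
    _ = 2 ^ (∑ i ∈ s, (x i - 1)) := Finset.prod_pow_eq_pow_sum s _ _

lemma sum_sub_one {s : Finset ℕ} {x : ℕ → ℕ} (h1 : ∀ i ∈ s, 1 ≤ x i) :
    ∑ i ∈ s, (x i - 1) + s.card = ∑ i ∈ s, x i := by
  have : ∀ i ∈ s, x i = (x i - 1) + 1 := fun i hi => by have := h1 i hi; omega
  rw [Finset.sum_congr rfl this, Finset.sum_add_distrib]
  simp

lemma path_prod_le {n : ℕ} {x : ℕ → ℕ} (h1 : ∀ i < n, 1 ≤ x i)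
    (hs : ∑ i ∈ Finset.range n, x i ≤ 2 * n) :
    ∏ i ∈ Finset.range n, x i ≤ 2 ^ n := by
  have h1' : ∀ i ∈ Finset.range n, 1 ≤ x i := fun i hi => h1 i (Finset.mem_range.1 hi)
  have hA := sum_sub_one h1'
  rw [Finset.card_range] at hA
  calc ∏ i ∈ Finset.range n, x i ≤ 2 ^ (∑ i ∈ Finset.range n, (x i - 1)) :=
        prod_le_two_pow _ _ h1'
    _ ≤ 2 ^ n := Nat.pow_le_pow_right (by omega) (by omega)

lemma path_prod_lt {n : ℕ} {x : ℕ → ℕ} (h1 : ∀ i < n, 1 ≤ x i)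
    (hs : ∑ i ∈ Finset.range n, x i ≤ 2 * n) {i₀ : ℕ} (hi₀ : i₀ < n) (hx₀ : x i₀ = 1) :
    ∏ i ∈ Finset.range n, x i ≤ 2 ^ n - 1 := by
  have h1' : ∀ i ∈ Finset.range n, 1 ≤ x i := fun i hi => h1 i (Finset.mem_range.1 hi)
  have hi₀' : i₀ ∈ Finset.range n := Finset.mem_range.2 hi₀
  set s := (Finset.range n).erase i₀ with hsdef
  have hsplit : ∏ i ∈ Finset.range n, x i = ∏ i ∈ s, x i := by
    rw [← Finset.mul_prod_erase _ _ hi₀', hx₀, one_mul]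
  have hscard : s.card = n - 1 := by
    rw [hsdef, Finset.card_erase_of_mem hi₀', Finset.card_range]
  have h1s : ∀ i ∈ s, 1 ≤ x i := fun i hi => h1' i (Finset.mem_of_mem_erase hi)
  have hAn : ∑ i ∈ s, (x i - 1) ≤ n := by
    have e1 := sum_sub_one h1'
    rw [Finset.card_range] at e1
    have e2 : ∑ i ∈ s, (x i - 1) + (x i₀ - 1) = ∑ i ∈ Finset.range n, (x i - 1) :=
      Finset.sum_erase_add _ _ hi₀'
    omega
  rw [hsplit]
  by_cases hbig : ∃ i ∈ s, 3 ≤ x i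
  · obtain ⟨i₁, hi₁, hxi₁⟩ := hbig
    set s' := s.erase i₁ with hs'def
    have hsplit2 : ∏ i ∈ s, x i = x i₁ * ∏ i ∈ s', x i :=
      (Finset.mul_prod_erase _ _ hi₁).symm
    have h1s' : ∀ i ∈ s', 1 ≤ x i := fun i hi => h1s i (Finset.mem_of_mem_erase hi)
    have hA2 : ∑ i ∈ s', (x i - 1) + (x i₁ - 1) = ∑ i ∈ s, (x i - 1) :=
      Finset.sum_erase_add _ _ hi₁
    set A := ∑ i ∈ s, (x i - 1) with hAdef
    set b := x i₁ - 1 with hbdef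
    have hbA : b ≤ A := by omega
    have hb2 : 2 ≤ b := by omega
    have step1 : ∏ i ∈ s', x i ≤ 2 ^ (A - b) := by
      have := prod_le_two_pow s' x h1s'
      have e3 : ∑ i ∈ s', (x i - 1) = A - b := by omega
      rwa [e3] at this
    have step2 : x i₁ ≤ 2 ^ b - 1 := by
      have := le_two_pow_pred_sub hxi₁
      have e4 : x i₁ - 1 = b := rfl
      rwa [e4] at this
    have step3 : x i₁ * ∏ i ∈ s', x i ≤ (2 ^ b - 1) * 2 ^ (A - b) :=
      Nat.mul_le_mul step2 step1
    have step4 : (2 ^ b - 1) * 2 ^ (A - b) = 2 ^ A - 2 ^ (A - b) := by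
      rw [Nat.sub_mul, one_mul, ← pow_add]
      congr 2
      omega
    have h5 : 1 ≤ 2 ^ (A - b) := Nat.one_le_two_pow
    have h6 : 2 ^ A ≤ 2 ^ n := Nat.pow_le_pow_right (by omega) hAn
    omega
  · push_neg at hbig
    have : ∏ i ∈ s, x i ≤ ∏ i ∈ s, 2 :=
      Finset.prod_le_prod' (fun i hi => by have := hbig i hi; omega)
    rw [Finset.prod_const, hscard] at this
    have h7 : 2 ^ n = 2 * 2 ^ (n - 1) := by
      rw [← pow_succ']
      congr 1
      omega
    have h8 : 1 ≤ 2 ^ (n-1) := Nat.one_le_two_pow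
    omega

/-- The chord theorem: a homomorphism strict on all maximal paths is strict. -/
lemma strict_of_paths {G H : Dgraph} {n : ℕ} (hG : G.MemTa) (hH : H.MemTa)
    (hhG : G.height = n) (hhH : H.height = n)
    (hGp : ∀ v ∈ G.V, ∃ p, G.IsPath p ∧ p.length = n + 1 ∧ v ∈ p)
    {ξ : ℕ → ℕ} (hξ : ξ ∈ Hom G H)
    (hstrict : ∀ u : ℕ → ℕ, G.FPath u n → ∀ i < n, ξ (u i) ≠ ξ (u (i+1))) :
    ∀ p ∈ G.Astar, ξ p.1 ≠ ξ p.2 := by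
  rintro ⟨v, w⟩ harc hcol
  rw [Astar, Finset.mem_filter] at harc
  obtain ⟨harcA, hvw⟩ := harc
  simp only at hvw hcol
  have hvV : v ∈ G.V := (G.A_sub _ harcA).1
  have hwV : w ∈ G.V := (G.A_sub _ harcA).2
  -- maximal path through v
  obtain ⟨p, hp, hplen, hvp⟩ := hGp v hvV
  obtain ⟨q, hq, hqlen, hwq⟩ := hGp w hwV
  have hP : G.FPath (fun i => p.getD i 0) n := by
    have := isPath_fpath hp
    rwa [hplen, Nat.add_sub_cancel] at this
  have hQ : G.FPath (fun i => q.getD i 0) n := by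
    have := isPath_fpath hq
    rwa [hqlen, Nat.add_sub_cancel] at this
  set P : ℕ → ℕ := fun i => p.getD i 0 with hPdef
  set Q : ℕ → ℕ := fun i => q.getD i 0 with hQdef
  obtain ⟨i, hilen, hPi⟩ : ∃ i ≤ n, P i = v := by
    obtain ⟨i, hi, he⟩ := List.getElem_of_mem hvp
    refine ⟨i, by omega, ?_⟩
    show p.getD i 0 = v
    rw [List.getD_eq_getElem _ _ hi]
    exact he
  obtain ⟨j, hjlen, hQj⟩ : ∃ j ≤ n, Q j = w := by
    obtain ⟨j, hj, he⟩ := List.getElem_of_mem hwq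
    refine ⟨j, by omega, ?_⟩
    show q.getD j 0 = w
    rw [List.getD_eq_getElem _ _ hj]
    exact he
  -- the concatenated walk in G shows j ≥ i + 1
  have hji : i + 1 ≤ j := by
    have hw1 : G.FPath (fun s => if s ≤ i then P s else Q (j + (s - (i+1)))) (i + 1 + (n - j)) := by
      apply fpath_of_proper hG
      · intro s hs
        by_cases h' : s ≤ i
        · rw [if_pos h']; exact hP.1 s (by omega)
        · rw [if_neg h']; exact hQ.1 _ (by omega)
      · intro s hs
        by_cases h' : s < i
        · rw [if_pos (by omega : s ≤ i), if_pos (by omega : s + 1 ≤ i)]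
          exact ⟨hP.2.1 s (by omega), fun he => by
            have := hP.2.2 s (by omega) (s+1) (by omega) he; omega⟩
        · by_cases h'' : s = i
          · subst h''
            rw [if_pos (le_refl _), if_neg (by omega)]
            have e1 : j + (s + 1 - (s+1)) = j := by omega
            rw [e1, hPi, hQj]
            exact ⟨harcA, hvw⟩
          · rw [if_neg (by omega), if_neg (by omega)]
            have e1 : j + (s + 1 - (i+1)) = j + (s - (i+1)) + 1 := by omega
            rw [e1]
            refine ⟨hQ.2.1 _ (by omega), fun he => ?_⟩
            have := hQ.2.2 _ (by omega) _ (by omega) he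
            omega
    have := fpath_le_height hw1
    rw [hhG] at this
    omega
  -- the concatenated walk in H shows j ≤ i
  have hij : j ≤ i := by
    have hw2 : H.FPath (fun s => if s ≤ j then ξ (Q s) else ξ (P (i + (s - j)))) (j + (n - i)) := by
      apply fpath_of_proper hH
      · intro s hs
        by_cases h' : s ≤ j
        · rw [if_pos h']; exact hξ.1 _ (hQ.1 s (by omega))
        · rw [if_neg h']; exact hξ.1 _ (hP.1 _ (by omega))
      · intro s hs
        by_cases h' : s < j
        · rw [if_pos (by omega : s ≤ j), if_pos (by omega : s + 1 ≤ j)]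
          refine ⟨hξ.2.1 (Q s, Q (s+1)) (hQ.2.1 s (by omega)), ?_⟩
          exact hstrict Q hQ s (by omega)
        · by_cases h'' : s = j
          · subst h''
            rw [if_pos (le_refl _), if_neg (by omega)]
            have e1 : i + (s + 1 - s) = i + 1 := by omega
            rw [e1, hQj, hcol.symm, ← hPi]
            refine ⟨hξ.2.1 (P i, P (i+1)) (hP.2.1 i (by omega)), ?_⟩
            exact hstrict P hP i (by omega)
          · rw [if_neg (by omega), if_neg (by omega)]
            have e1 : i + (s + 1 - j) = i + (s - j) + 1 := by omega
            rw [e1]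
            refine ⟨hξ.2.1 (P (i + (s-j)), P (i + (s-j) + 1)) (hP.2.1 _ (by omega)), ?_⟩
            exact hstrict P hP _ (by omega)
    have := fpath_le_height hw2
    rw [hhH] at this
    omega
  omega

end
end Dgraph
namespace Dgraph
noncomputable section
open scoped Classical

/-- all lists of a given length with entries in `V`. -/
def listsLen (V : Finset ℕ) : ℕ → Finset (List ℕ)
  | 0 => {[]}
  | m+1 => Finset.image₂ List.cons V (listsLen V m)

lemma mem_listsLen (V : Finset ℕ) : ∀ m (l : List ℕ),
    l ∈ listsLen V m ↔ l.length = m ∧ ∀ v ∈ l, v ∈ V := by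
  intro m
  induction m with
  | zero =>
    intro l
    constructor
    · intro h
      rw [listsLen, Finset.mem_singleton] at h
      subst h; simp
    · intro ⟨h1, _⟩
      rw [listsLen, Finset.mem_singleton]
      exact List.length_eq_zero_iff.1 h1
  | succ m ih =>
    intro l
    rw [listsLen, Finset.mem_image₂]
    constructor
    · rintro ⟨v, hv, l', hl', rfl⟩
      obtain ⟨h1, h2⟩ := (ih l').1 hl'
      refine ⟨by simp [h1], ?_⟩
      intro x hx
      rcases List.mem_cons.1 hx with rfl | hx
      · exact hv
      · exact h2 x hx
    · rintro ⟨h1, h2⟩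
      match l with
      | [] => simp at h1
      | v :: l' =>
        refine ⟨v, h2 v (by simp), l', (ih l').2 ⟨by simpa using h1, ?_⟩, rfl⟩
        intro x hx
        exact h2 x (List.mem_cons_of_mem _ hx)

/-- all paths of length n in G -/
def maxPaths (G : Dgraph) (n : ℕ) : Finset (List ℕ) :=
  (listsLen G.V (n+1)).filter (fun p => G.IsPath p)

lemma mem_maxPaths {G : Dgraph} {n : ℕ} {p : List ℕ} :
    p ∈ maxPaths G n ↔ G.IsPath p ∧ p.length = n + 1 := by
  rw [maxPaths, Finset.mem_filter, mem_listsLen]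
  constructor
  · rintro ⟨⟨h1, _⟩, h2⟩; exact ⟨h2, h1⟩
  · rintro ⟨h1, h2⟩; exact ⟨⟨h2, h1.2.2.1⟩, h1⟩

lemma maxPaths_fpath {G : Dgraph} {n : ℕ} {p : List ℕ} (hp : p ∈ maxPaths G n) :
    G.FPath (fun i => p.getD i 0) n := by
  obtain ⟨h1, h2⟩ := mem_maxPaths.1 hp
  have := isPath_fpath h1
  rwa [h2, Nat.add_sub_cancel] at this

/-- the list of arcs of a path, by position -/
def arcsOfN (p : List ℕ) (n : ℕ) : List (ℕ × ℕ) :=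
  (List.range n).map (fun i => (p.getD i 0, p.getD (i+1) 0))

lemma mem_arcsOfN {p : List ℕ} {n : ℕ} {a : ℕ × ℕ} :
    a ∈ arcsOfN p n ↔ ∃ i < n, a = (p.getD i 0, p.getD (i+1) 0) := by
  simp [arcsOfN, eq_comm]

lemma arcsOfN_nodup {G : Dgraph} {n : ℕ} {p : List ℕ} (hp : p ∈ maxPaths G n) :
    (arcsOfN p n).Nodup := by
  have h := maxPaths_fpath hp
  exact arcs_nodup h.2.2

lemma arcsOfN_sub {G : Dgraph} {n : ℕ} {p : List ℕ} (hp : p ∈ maxPaths G n) :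
    ∀ a ∈ arcsOfN p n, a ∈ G.Astar := by
  intro a ha
  obtain ⟨i, hi, rfl⟩ := mem_arcsOfN.1 ha
  have h := maxPaths_fpath hp
  rw [Astar, Finset.mem_filter]
  refine ⟨h.2.1 i hi, fun he => ?_⟩
  have := h.2.2 i (by omega) (i+1) (by omega) he
  omega

/-- number of maximal paths through an arc -/
def cnt (G : Dgraph) (n : ℕ) (a : ℕ × ℕ) : ℕ :=
  ((maxPaths G n).filter (fun p => a ∈ arcsOfN p n)).card

lemma filter_astar_eq_toFinset {G : Dgraph} {n : ℕ} {p : List ℕ} (hp : p ∈ maxPaths G n) :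
    G.Astar.filter (fun a => a ∈ arcsOfN p n) = (arcsOfN p n).toFinset := by
  ext a
  rw [Finset.mem_filter, List.mem_toFinset]
  exact ⟨fun h => h.2, fun h => ⟨arcsOfN_sub hp a h, h⟩⟩

lemma card_arcs {G : Dgraph} {n : ℕ} {p : List ℕ} (hp : p ∈ maxPaths G n) :
    (arcsOfN p n).toFinset.card = n := by
  rw [List.toFinset_card_of_nodup (arcsOfN_nodup hp)]
  simp [arcsOfN]

lemma sum_cnt (G : Dgraph) (n : ℕ) :
    ∑ a ∈ G.Astar, cnt G n a = (maxPaths G n).card * n := by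
  have e1 : ∀ a ∈ G.Astar, cnt G n a
      = ∑ p ∈ maxPaths G n, (if a ∈ arcsOfN p n then 1 else 0) := by
    intro a _
    rw [cnt, Finset.card_filter]
  rw [Finset.sum_congr rfl e1, Finset.sum_comm]
  have e2 : ∀ p ∈ maxPaths G n,
      (∑ a ∈ G.Astar, if a ∈ arcsOfN p n then 1 else 0) = n := by
    intro p hp
    rw [← Finset.card_filter, filter_astar_eq_toFinset hp, card_arcs hp]
  rw [Finset.sum_congr rfl e2, Finset.sum_const, smul_eq_mul]

lemma prod_regroup (G : Dgraph) (n : ℕ) (F : ℕ × ℕ → ℕ) :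
    ∏ a ∈ G.Astar, F a ^ (cnt G n a) =
      ∏ p ∈ maxPaths G n, ∏ i ∈ Finset.range n, F (p.getD i 0, p.getD (i+1) 0) := by
  have e1 : ∀ a ∈ G.Astar, F a ^ (cnt G n a)
      = ∏ p ∈ maxPaths G n, (if a ∈ arcsOfN p n then F a else 1) := by
    intro a _
    rw [← Finset.prod_filter, Finset.prod_const, cnt]
  rw [Finset.prod_congr rfl e1, Finset.prod_comm]
  apply Finset.prod_congr rfl
  intro p hp
  rw [← Finset.prod_filter, filter_astar_eq_toFinset hp]
  rw [List.prod_toFinset _ (arcsOfN_nodup hp)]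
  rw [arcsOfN, List.map_map, list_prod_map_range]
  rfl

end
end Dgraph
namespace Dgraph
noncomputable section
open scoped Classical

def homFinset (G H : Dgraph) : Finset (ℕ → ℕ) :=
  ((G.V.pi (fun _ => H.V)).image (fun g x => if h : x ∈ G.V then g x h else 0)).filter
    (fun f => f ∈ Hom G H)

lemma coe_homFinset (G H : Dgraph) : (homFinset G H : Set (ℕ → ℕ)) = Hom G H := by
  ext f
  simp only [homFinset, Finset.coe_filter, Set.mem_setOf_eq, Finset.mem_image]
  constructor
  · rintro ⟨_, hf⟩; exact hf
  · intro hf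
    refine ⟨⟨fun x _ => f x, ?_, ?_⟩, hf⟩
    · rw [Finset.mem_pi]
      intro a ha
      exact hf.1 a ha
    · funext x
      show (if h : x ∈ G.V then f x else 0) = f x
      by_cases h : x ∈ G.V
      · rw [dif_pos h]
      · rw [dif_neg h]
        exact (hf.2.2 x h).symm

lemma ncard_hom (G H : Dgraph) : (Hom G H).ncard = (homFinset G H).card := by
  rw [← coe_homFinset, Set.ncard_coe_finset]

lemma mem_homFinset {G H : Dgraph} {f : ℕ → ℕ} : f ∈ homFinset G H ↔ f ∈ Hom G H := by
  rw [← Finset.mem_coe, coe_homFinset]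

def shomFinset (G H : Dgraph) : Finset (ℕ → ℕ) :=
  (homFinset G H).filter (fun f => f ∈ SHom G H)

lemma mem_shomFinset {G H : Dgraph} {f : ℕ → ℕ} : f ∈ shomFinset G H ↔ f ∈ SHom G H := by
  rw [shomFinset, Finset.mem_filter, mem_homFinset]
  exact ⟨fun h => h.2, fun h => ⟨h.1, h⟩⟩

lemma ncard_shom (G H : Dgraph) : (SHom G H).ncard = (shomFinset G H).card := by
  rw [← Set.ncard_coe_finset]
  congr 1
  ext f
  rw [Finset.mem_coe, mem_shomFinset]

/-- Finset of functions with prescribed values outside `E` and options inside `E`. -/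
def assignFinset (E : Finset ℕ) (opts : ℕ → Finset ℕ) (g : ℕ → ℕ) : Finset (ℕ → ℕ) :=
  (E.pi (fun e => opts e)).image (fun p x => if h : x ∈ E then p x h else g x)

lemma mem_assignFinset {E : Finset ℕ} {opts : ℕ → Finset ℕ} {g f : ℕ → ℕ} :
    f ∈ assignFinset E opts g ↔ (∀ e ∈ E, f e ∈ opts e) ∧ ∀ x ∉ E, f x = g x := by
  rw [assignFinset, Finset.mem_image]
  constructor
  · rintro ⟨p, hp, rfl⟩
    rw [Finset.mem_pi] at hp
    constructor
    · intro e he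
      show (if h : e ∈ E then p e h else g e) ∈ opts e
      rw [dif_pos he]
      exact hp e he
    · intro x hx
      show (if h : x ∈ E then p x h else g x) = g x
      rw [dif_neg hx]
  · rintro ⟨h1, h2⟩
    refine ⟨fun x _ => f x, ?_, ?_⟩
    · rw [Finset.mem_pi]; exact h1
    · funext x
      show (if h : x ∈ E then f x else g x) = f x
      by_cases h : x ∈ E
      · rw [dif_pos h]
      · rw [dif_neg h]
        exact (h2 x h).symm

lemma card_assignFinset (E : Finset ℕ) (opts : ℕ → Finset ℕ) (g : ℕ → ℕ) :
    (assignFinset E opts g).card = ∏ e ∈ E, (opts e).card := by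
  rw [assignFinset, Finset.card_image_of_injOn, Finset.card_pi]
  intro p hp q hq he
  funext x hx
  have h9 := congrFun he x
  simp only at h9
  rwa [dif_pos hx, dif_pos hx] at h9

/-- base for encoding the added midpoints -/
def encBase (G : Dgraph) : ℕ := G.V.sup id + 1

def enc (G : Dgraph) (t : (_ : ℕ × ℕ) × ℕ) : ℕ :=
  encBase G + Nat.pair (Nat.pair t.1.1 t.1.2) t.2

lemma enc_injective (G : Dgraph) : Function.Injective (enc G) := by
  intro s t he
  rw [enc, enc] at he
  have h2 : Nat.pair (Nat.pair s.1.1 s.1.2) s.2 = Nat.pair (Nat.pair t.1.1 t.1.2) t.2 := by omega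
  have h3 := congrArg Nat.unpair h2
  rw [Nat.unpair_pair, Nat.unpair_pair] at h3
  have h4 : Nat.pair s.1.1 s.1.2 = Nat.pair t.1.1 t.1.2 := (Prod.mk.injEq _ _ _ _ ▸ h3).1
  have h5 : s.2 = t.2 := (Prod.mk.injEq _ _ _ _ ▸ h3).2
  have h6 := congrArg Nat.unpair h4
  rw [Nat.unpair_pair, Nat.unpair_pair] at h6
  have h7 : s.1.1 = t.1.1 := (Prod.mk.injEq _ _ _ _ ▸ h6).1
  have h8 : s.1.2 = t.1.2 := (Prod.mk.injEq _ _ _ _ ▸ h6).2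
  obtain ⟨⟨s1, s2⟩, s3⟩ := s
  obtain ⟨⟨t1, t2⟩, t3⟩ := t
  simp only at h5 h7 h8
  subst h5; subst h7; subst h8
  rfl

lemma enc_not_mem_V {G : Dgraph} (t : (_ : ℕ × ℕ) × ℕ) : enc G t ∉ G.V := by
  intro h
  have := Finset.le_sup (f := id) h
  rw [enc, encBase] at *
  simp only [id] at this
  omega

/-- decoding the first/second endpoint of the arc from the encoded midpoint -/
def dec1 (G : Dgraph) (e : ℕ) : ℕ := (Nat.unpair ((Nat.unpair (e - encBase G)).1)).1
def dec2 (G : Dgraph) (e : ℕ) : ℕ := (Nat.unpair ((Nat.unpair (e - encBase G)).1)).2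

lemma dec1_enc (G : Dgraph) (t : (_ : ℕ × ℕ) × ℕ) : dec1 G (enc G t) = t.1.1 := by
  rw [dec1, enc, Nat.add_sub_cancel_left, Nat.unpair_pair, Nat.unpair_pair]

lemma dec2_enc (G : Dgraph) (t : (_ : ℕ × ℕ) × ℕ) : dec2 G (enc G t) = t.1.2 := by
  rw [dec2, enc, Nat.add_sub_cancel_left, Nat.unpair_pair, Nat.unpair_pair]

/-- the index set of midpoints: arcs with multiplicity `k * cnt`. -/
def midT (G : Dgraph) (n k : ℕ) : Finset ((_ : ℕ × ℕ) × ℕ) :=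
  G.Astar.sigma (fun a => Finset.range (k * cnt G n a))

lemma mem_midT {G : Dgraph} {n k : ℕ} {t : (_ : ℕ × ℕ) × ℕ} :
    t ∈ midT G n k ↔ t.1 ∈ G.Astar ∧ t.2 < k * cnt G n t.1 := by
  rw [midT, Finset.mem_sigma, Finset.mem_range]

lemma midT_arc_on_path {G : Dgraph} {n k : ℕ} {t : (_ : ℕ × ℕ) × ℕ}
    (ht : t ∈ midT G n k) : ∃ p ∈ maxPaths G n, t.1 ∈ arcsOfN p n := by
  have h := (mem_midT.1 ht).2
  have : 0 < cnt G n t.1 := by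
    by_contra h'
    push_neg at h'
    interval_cases h'' : cnt G n t.1
    · omega
  rw [cnt, Finset.card_pos] at this
  obtain ⟨p, hp⟩ := this
  rw [Finset.mem_filter] at hp
  exact ⟨p, hp.1, hp.2⟩

def midE (G : Dgraph) (n k : ℕ) : Finset ℕ := (midT G n k).image (enc G)

lemma card_midE (G : Dgraph) (n k : ℕ) :
    (midE G n k).card = k * ((maxPaths G n).card * n) := by
  rw [midE, Finset.card_image_of_injective _ (enc_injective G), midT, Finset.card_sigma]
  have : ∀ a ∈ G.Astar, (Finset.range (k * cnt G n a)).card = k * cnt G n a := by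
    intro a _; rw [Finset.card_range]
  rw [Finset.sum_congr rfl this, ← Finset.mul_sum, sum_cnt]

end
end Dgraph
namespace Dgraph
noncomputable section
open scoped Classical

/-- the top weight -/
def Wt (G : Dgraph) (n : ℕ) : ℕ := 2 ^ ((maxPaths G n).card * n)

lemma Wt_pos (G : Dgraph) (n : ℕ) : 1 ≤ Wt G n := Nat.one_le_two_pow

section FiberBounds

variable {G H : Dgraph} {n k : ℕ}

lemma strict_arc_interval (hGTa : G.MemTa) (hHTa : H.MemTa) (hHrefl : H.IsRefl)
    (hhH : H.height = n) {ξ : ℕ → ℕ} (hξ : ξ ∈ Hom G H)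
    (hstrict : ∀ p ∈ G.Astar, ξ p.1 ≠ ξ p.2) {a : ℕ × ℕ}
    (hpa : ∃ p ∈ maxPaths G n, a ∈ arcsOfN p n) :
    (H.interval (ξ a.1) (ξ a.2)).card = 2 := by
  obtain ⟨p, hp, ha⟩ := hpa
  obtain ⟨i, hi, rfl⟩ := mem_arcsOfN.1 ha
  have hP := maxPaths_fpath hp
  set P : ℕ → ℕ := fun i => p.getD i 0 with hPdef
  have harc : ∀ j < n, (P j, P (j+1)) ∈ G.Astar := by
    intro j hj
    rw [Astar, Finset.mem_filter]
    refine ⟨hP.2.1 j hj, fun he => ?_⟩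
    have := hP.2.2 j (by omega) (j+1) (by omega) he
    omega
  have hξP : H.FPath (fun j => ξ (P j)) n := by
    apply fpath_of_proper hHTa
    · intro j hj
      exact hξ.1 _ (hP.1 j hj)
    · intro j hj
      exact ⟨hξ.2.1 _ (hP.2.1 j hj), hstrict _ (harc j hj)⟩
  have hξP' : H.FPath (fun j => ξ (P j)) H.height := by rw [hhH]; exact hξP
  have := iota_pair hHTa hHrefl hξP' (by rw [hhH]; exact hi)
  exact this

lemma hom_path_sum (hH : MemR H) (hhH : H.height = n) {ξ : ℕ → ℕ}
    (hξ : ξ ∈ Hom G H) {p : List ℕ} (hp : p ∈ maxPaths G n) :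
    ∑ i ∈ Finset.range n, H.iota (ξ (p.getD i 0)) (ξ (p.getD (i+1) 0)) ≤ 2 * n := by
  have hP := maxPaths_fpath hp
  exact walk_sum_le hH hhH (fun i => ξ (p.getD i 0))
    (fun i hi => hξ.1 _ (hP.1 i hi))
    (fun i hi => hξ.2.1 _ (hP.2.1 i hi))

/-- the weight of a homomorphism -/
def Mval (H : Dgraph) (G : Dgraph) (n : ℕ) (ξ : ℕ → ℕ) : ℕ :=
  ∏ p ∈ maxPaths G n, ∏ i ∈ Finset.range n, H.iota (ξ (p.getD i 0)) (ξ (p.getD (i+1) 0))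

lemma Mval_le (hH : MemR H) (hhH : H.height = n) {ξ : ℕ → ℕ} (hξ : ξ ∈ Hom G H) :
    Mval H G n ξ ≤ Wt G n := by
  rw [Mval, Wt, mul_comm, pow_mul, ← Finset.prod_const]
  apply Finset.prod_le_prod'
  intro p hp
  apply path_prod_le
  · intro i hi
    have hP := maxPaths_fpath hp
    exact iota_pos hH.2.1 (hξ.2.1 _ (hP.2.1 i hi))
  · exact hom_path_sum hH hhH hξ hp

lemma Mval_lt (hGTa : G.MemTa) (hhG : G.height = n)
    (hGp : ∀ v ∈ G.V, ∃ p, G.IsPath p ∧ p.length = n + 1 ∧ v ∈ p)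
    (hH : MemR H) (hhH : H.height = n) {ξ : ℕ → ℕ} (hξ : ξ ∈ Hom G H)
    (hns : ¬ ∀ p ∈ G.Astar, ξ p.1 ≠ ξ p.2) :
    Mval H G n ξ ≤ Wt G n - 1 := by
  -- find a maximal path with a collapsed arc
  have hcol : ∃ p₀ ∈ maxPaths G n, ∃ i₀ < n, ξ (p₀.getD i₀ 0) = ξ (p₀.getD (i₀+1) 0) := by
    by_contra hcon
    push_neg at hcon
    apply hns
    apply strict_of_paths hGTa hH.1 hhG hhH hGp hξ
    intro u hu i hi
    have hmem : mkl u n ∈ maxPaths G n := mem_maxPaths.2 ⟨hu.isPath_mkl, mkl_length u n⟩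
    have := hcon (mkl u n) hmem i hi
    rwa [mkl_getD u n i (by omega), mkl_getD u n (i+1) (by omega)] at this
  obtain ⟨p₀, hp₀, i₀, hi₀, hcol₀⟩ := hcol
  have hNn : 1 ≤ (maxPaths G n).card := Finset.card_pos.2 ⟨p₀, hp₀⟩
  have hppos : ∀ p ∈ maxPaths G n, ∀ i < n,
      1 ≤ H.iota (ξ (p.getD i 0)) (ξ (p.getD (i+1) 0)) := by
    intro p hp i hi
    exact iota_pos hH.2.1 (hξ.2.1 _ ((maxPaths_fpath hp).2.1 i hi))
  have hple : ∀ p ∈ maxPaths G n,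
      ∏ i ∈ Finset.range n, H.iota (ξ (p.getD i 0)) (ξ (p.getD (i+1) 0)) ≤ 2 ^ n := by
    intro p hp
    exact path_prod_le (hppos p hp) (hom_path_sum hH hhH hξ hp)
  have hp₀lt : ∏ i ∈ Finset.range n, H.iota (ξ (p₀.getD i 0)) (ξ (p₀.getD (i+1) 0))
      ≤ 2 ^ n - 1 := by
    apply path_prod_lt (hppos p₀ hp₀) (hom_path_sum hH hhH hξ hp₀) hi₀
    rw [hcol₀]
    exact iota_self hH.1 hH.2.1 (hξ.1 _ ((maxPaths_fpath hp₀).1 (i₀+1) (by omega)))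
  -- combine
  rw [Mval, ← Finset.mul_prod_erase _ _ hp₀]
  have hrest : ∏ p ∈ (maxPaths G n).erase p₀,
      ∏ i ∈ Finset.range n, H.iota (ξ (p.getD i 0)) (ξ (p.getD (i+1) 0))
      ≤ 2 ^ (n * ((maxPaths G n).card - 1)) := by
    calc _ ≤ ∏ p ∈ (maxPaths G n).erase p₀, 2 ^ n :=
          Finset.prod_le_prod' (fun p hp => hple p (Finset.mem_of_mem_erase hp))
      _ = 2 ^ (n * ((maxPaths G n).card - 1)) := by
          rw [Finset.prod_const, Finset.card_erase_of_mem hp₀, ← pow_mul, mul_comm]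
  calc _ ≤ (2 ^ n - 1) * 2 ^ (n * ((maxPaths G n).card - 1)) :=
        Nat.mul_le_mul hp₀lt hrest
    _ ≤ Wt G n - 1 := by
        rw [Wt, Nat.sub_mul, one_mul, ← pow_add]
        have e1 : n + n * ((maxPaths G n).card - 1) = (maxPaths G n).card * n := by
          obtain ⟨m, hm⟩ := Nat.exists_eq_add_of_le hNn
          rw [hm]
          have e2 : 1 + m - 1 = m := by omega
          rw [e2]; ring
        rw [e1]
        have h2 : 1 ≤ 2 ^ (n * ((maxPaths G n).card - 1)) := Nat.one_le_two_pow
        omega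

end FiberBounds

section Gadget

variable {G H Γ : Dgraph} {n k : ℕ}

/-- restriction maps gadget homs to homs -/
lemma res_hom (hV : Γ.V = G.V ∪ midE G n k) (hA : G.A ⊆ Γ.A)
    {f : ℕ → ℕ} (hf : f ∈ Hom Γ H) : restrict G.V f ∈ Hom G H := by
  refine ⟨?_, ?_, ?_⟩
  · intro v hv
    rw [restrict, if_pos hv]
    exact hf.1 v (by rw [hV]; exact Finset.mem_union_left _ hv)
  · intro p hp
    have h1 := (G.A_sub p hp).1
    have h2 := (G.A_sub p hp).2
    show ((if p.1 ∈ G.V then f p.1 else 0), (if p.2 ∈ G.V then f p.2 else 0)) ∈ H.A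
    rw [if_pos h1, if_pos h2]
    exact hf.2.1 p (hA hp)
  · intro v hv
    rw [restrict, if_neg hv]

lemma fiber_subset (hV : Γ.V = G.V ∪ midE G n k) (hA : G.A ⊆ Γ.A)
    (hmidarc : ∀ t ∈ midT G n k, (t.1.1, enc G t) ∈ Γ.A ∧ (enc G t, t.1.2) ∈ Γ.A)
    {ξ : ℕ → ℕ} (hξ : ξ ∈ Hom G H) :
    (homFinset Γ H).filter (fun f => restrict G.V f = ξ) ⊆
      assignFinset (midE G n k)
        (fun e => H.interval (ξ (dec1 G e)) (ξ (dec2 G e))) ξ := by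
  intro f hf
  rw [Finset.mem_filter, mem_homFinset] at hf
  obtain ⟨hfhom, hres⟩ := hf
  have hagree : ∀ x ∈ G.V, f x = ξ x := by
    intro x hx
    have := congrFun hres x
    rwa [restrict, if_pos hx] at this
  rw [mem_assignFinset]
  constructor
  · intro e he
    rw [midE, Finset.mem_image] at he
    obtain ⟨t, ht, rfl⟩ := he
    rw [dec1_enc, dec2_enc]
    have ht1 := (mem_midT.1 ht).1
    rw [Astar, Finset.mem_filter] at ht1
    have hv1 : t.1.1 ∈ G.V := (G.A_sub _ ht1.1).1
    have hv2 : t.1.2 ∈ G.V := (G.A_sub _ ht1.1).2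
    have harc1 := (hmidarc t ht).1
    have harc2 := (hmidarc t ht).2
    have hin1 : (f t.1.1, f (enc G t)) ∈ H.A := hfhom.2.1 _ harc1
    have hin2 : (f (enc G t), f t.1.2) ∈ H.A := hfhom.2.1 _ harc2
    rw [hagree _ hv1] at hin1
    rw [hagree _ hv2] at hin2
    refine mem_interval.2 ⟨?_, hin1, hin2⟩
    apply hfhom.1
    rw [hV]
    apply Finset.mem_union_right
    rw [midE]
    exact Finset.mem_image_of_mem _ ht
  · intro x hx
    by_cases hxV : x ∈ G.V
    · exact hagree x hxV
    · have hnx : x ∉ Γ.V := by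
        rw [hV]
        intro hc
        rcases Finset.mem_union.1 hc with h | h
        · exact hxV h
        · exact hx h
      rw [hfhom.2.2 x hnx, (hξ.2.2 x hxV)]

lemma fiber_eq_of_strict (hV : Γ.V = G.V ∪ midE G n k) (hA : G.A ⊆ Γ.A)
    (hmidarc : ∀ t ∈ midT G n k, (t.1.1, enc G t) ∈ Γ.A ∧ (enc G t, t.1.2) ∈ Γ.A)
    (hA4 : ∀ ξ ∈ Hom G H, (∀ p ∈ G.Astar, ξ p.1 ≠ ξ p.2) → ∀ f : ℕ → ℕ,
      (∀ t ∈ midT G n k, f (enc G t) ∈ H.interval (ξ t.1.1) (ξ t.1.2)) →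
      (∀ x, x ∉ midE G n k → f x = ξ x) → f ∈ Hom Γ H)
    {ξ : ℕ → ℕ} (hξ : ξ ∈ Hom G H) (hstrict : ∀ p ∈ G.Astar, ξ p.1 ≠ ξ p.2) :
    (homFinset Γ H).filter (fun f => restrict G.V f = ξ) =
      assignFinset (midE G n k)
        (fun e => H.interval (ξ (dec1 G e)) (ξ (dec2 G e))) ξ := by
  apply Finset.Subset.antisymm (fiber_subset hV hA hmidarc hξ)
  intro f hf
  rw [mem_assignFinset] at hf
  obtain ⟨h1, h2⟩ := hf
  have hfmid : ∀ t ∈ midT G n k, f (enc G t) ∈ H.interval (ξ t.1.1) (ξ t.1.2) := by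
    intro t ht
    have := h1 (enc G t) (by rw [midE]; exact Finset.mem_image_of_mem _ ht)
    rwa [dec1_enc, dec2_enc] at this
  have hfout : ∀ x, x ∉ midE G n k → f x = ξ x := h2
  have hfhom : f ∈ Hom Γ H := hA4 ξ hξ hstrict f hfmid hfout
  rw [Finset.mem_filter, mem_homFinset]
  refine ⟨hfhom, ?_⟩
  funext x
  rw [restrict]
  by_cases hx : x ∈ G.V
  · rw [if_pos hx]
    apply hfout
    intro hc
    rw [midE, Finset.mem_image] at hc
    obtain ⟨t, _, rfl⟩ := hc
    exact enc_not_mem_V t hx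
  · rw [if_neg hx, (hξ.2.2 x hx)]

end Gadget
end
end Dgraph
namespace Dgraph
noncomputable section
open scoped Classical

section Counting

variable {G H Γ : Dgraph} {n k : ℕ}

lemma assign_card {ξ : ℕ → ℕ} :
    (assignFinset (midE G n k)
      (fun e => H.interval (ξ (dec1 G e)) (ξ (dec2 G e))) ξ).card
      = ∏ t ∈ midT G n k, H.iota (ξ t.1.1) (ξ t.1.2) := by
  rw [card_assignFinset, midE, Finset.prod_image
    (fun x _ y _ h => enc_injective G h)]
  apply Finset.prod_congr rfl
  intro t _
  rw [dec1_enc, dec2_enc, iota]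

lemma prod_midT_eq {ξ : ℕ → ℕ} :
    ∏ t ∈ midT G n k, H.iota (ξ t.1.1) (ξ t.1.2) = Mval H G n ξ ^ k := by
  rw [midT, Finset.prod_sigma]
  have e1 : ∀ a ∈ G.Astar,
      (∏ _j ∈ Finset.range (k * cnt G n a), H.iota (ξ a.1) (ξ a.2))
      = (H.iota (ξ a.1) (ξ a.2) ^ cnt G n a) ^ k := by
    intro a _
    rw [Finset.prod_const, Finset.card_range, mul_comm, pow_mul]
  rw [Finset.prod_congr rfl e1, Finset.prod_pow]
  congr 1
  exact prod_regroup G n (fun a => H.iota (ξ a.1) (ξ a.2))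

lemma Mval_strict (hGTa : G.MemTa) (hHTa : H.MemTa) (hHrefl : H.IsRefl)
    (hhH : H.height = n) {ξ : ℕ → ℕ} (hξ : ξ ∈ Hom G H)
    (hstrict : ∀ p ∈ G.Astar, ξ p.1 ≠ ξ p.2) :
    Mval H G n ξ = Wt G n := by
  rw [Mval, Wt, mul_comm, pow_mul, ← Finset.prod_const]
  apply Finset.prod_congr rfl
  intro p hp
  have e1 : ∀ i ∈ Finset.range n,
      H.iota (ξ (p.getD i 0)) (ξ (p.getD (i+1) 0)) = 2 := by
    intro i hi
    rw [Finset.mem_range] at hi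
    have : (p.getD i 0, p.getD (i+1) 0) ∈ arcsOfN p n := mem_arcsOfN.2 ⟨i, hi, rfl⟩
    exact strict_arc_interval hGTa hHTa hHrefl hhH hξ hstrict ⟨p, hp, this⟩
  rw [Finset.prod_congr rfl e1, Finset.prod_const, Finset.card_range]

/-- lower bound on the number of homs of the gadget -/
lemma bound1 (hGTa : G.MemTa) (hHTa : H.MemTa) (hHrefl : H.IsRefl)
    (hhH : H.height = n)
    (hV : Γ.V = G.V ∪ midE G n k) (hA : G.A ⊆ Γ.A)
    (hmidarc : ∀ t ∈ midT G n k, (t.1.1, enc G t) ∈ Γ.A ∧ (enc G t, t.1.2) ∈ Γ.A)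
    (hA4 : ∀ ξ ∈ Hom G H, (∀ p ∈ G.Astar, ξ p.1 ≠ ξ p.2) → ∀ f : ℕ → ℕ,
      (∀ t ∈ midT G n k, f (enc G t) ∈ H.interval (ξ t.1.1) (ξ t.1.2)) →
      (∀ x, x ∉ midE G n k → f x = ξ x) → f ∈ Hom Γ H) :
    (shomFinset G H).card * (Wt G n) ^ k ≤ (homFinset Γ H).card := by
  have hmaps : ∀ f ∈ homFinset Γ H, restrict G.V f ∈ homFinset G H := by
    intro f hf
    rw [mem_homFinset] at hf ⊢
    exact res_hom hV hA hf
  rw [Finset.card_eq_sum_card_fiberwise hmaps]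
  have hsub : shomFinset G H ⊆ homFinset G H := Finset.filter_subset _ _
  calc (shomFinset G H).card * (Wt G n) ^ k
      = ∑ _ξ ∈ shomFinset G H, (Wt G n) ^ k := by
        rw [Finset.sum_const, smul_eq_mul]
    _ = ∑ ξ ∈ shomFinset G H,
        ((homFinset Γ H).filter (fun f => restrict G.V f = ξ)).card := by
        apply Finset.sum_congr rfl
        intro ξ hξ
        rw [mem_shomFinset] at hξ
        have hξhom : ξ ∈ Hom G H := hξ.1
        have hξs : ∀ p ∈ G.Astar, ξ p.1 ≠ ξ p.2 := hξ.2
        rw [fiber_eq_of_strict hV hA hmidarc hA4 hξhom hξs, assign_card,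
          prod_midT_eq, Mval_strict hGTa hHTa hHrefl hhH hξhom hξs]
    _ ≤ ∑ ξ ∈ homFinset G H,
        ((homFinset Γ H).filter (fun f => restrict G.V f = ξ)).card :=
        Finset.sum_le_sum_of_subset hsub

/-- upper bound on the number of homs of the gadget -/
lemma bound2 (hGTa : G.MemTa) (hhG : G.height = n)
    (hGp : ∀ v ∈ G.V, ∃ p, G.IsPath p ∧ p.length = n + 1 ∧ v ∈ p)
    (hH : MemR H) (hhH : H.height = n)
    (hV : Γ.V = G.V ∪ midE G n k) (hA : G.A ⊆ Γ.A)
    (hmidarc : ∀ t ∈ midT G n k, (t.1.1, enc G t) ∈ Γ.A ∧ (enc G t, t.1.2) ∈ Γ.A) :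
    (homFinset Γ H).card ≤ (shomFinset G H).card * (Wt G n) ^ k
      + (homFinset G H).card * (Wt G n - 1) ^ k := by
  have hmaps : ∀ f ∈ homFinset Γ H, restrict G.V f ∈ homFinset G H := by
    intro f hf
    rw [mem_homFinset] at hf ⊢
    exact res_hom hV hA hf
  rw [Finset.card_eq_sum_card_fiberwise hmaps]
  rw [← Finset.sum_filter_add_sum_filter_not (homFinset G H) (fun ξ => ξ ∈ SHom G H)]
  have e0 : (homFinset G H).filter (fun ξ => ξ ∈ SHom G H) = shomFinset G H := rfl
  rw [e0]
  apply Nat.add_le_add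
  · calc ∑ ξ ∈ shomFinset G H,
        ((homFinset Γ H).filter (fun f => restrict G.V f = ξ)).card
        ≤ ∑ _ξ ∈ shomFinset G H, (Wt G n) ^ k := by
          apply Finset.sum_le_sum
          intro ξ hξ
          rw [mem_shomFinset] at hξ
          calc ((homFinset Γ H).filter (fun f => restrict G.V f = ξ)).card
              ≤ (assignFinset (midE G n k)
                (fun e => H.interval (ξ (dec1 G e)) (ξ (dec2 G e))) ξ).card :=
                Finset.card_le_card (fiber_subset hV hA hmidarc hξ.1)
            _ = (Wt G n) ^ k := by
                rw [assign_card, prod_midT_eq,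
                  Mval_strict hGTa hH.1 hH.2.1 hhH hξ.1 hξ.2]
      _ = (shomFinset G H).card * (Wt G n) ^ k := by
          rw [Finset.sum_const, smul_eq_mul]
  · calc ∑ ξ ∈ (homFinset G H).filter (fun ξ => ¬ ξ ∈ SHom G H),
        ((homFinset Γ H).filter (fun f => restrict G.V f = ξ)).card
        ≤ ∑ _ξ ∈ (homFinset G H).filter (fun ξ => ¬ ξ ∈ SHom G H), (Wt G n - 1) ^ k := by
          apply Finset.sum_le_sum
          intro ξ hξ
          rw [Finset.mem_filter, mem_homFinset] at hξ
          obtain ⟨hξhom, hξns⟩ := hξ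
          have hns : ¬ ∀ p ∈ G.Astar, ξ p.1 ≠ ξ p.2 := by
            intro hs
            exact hξns ⟨hξhom, hs⟩
          calc ((homFinset Γ H).filter (fun f => restrict G.V f = ξ)).card
              ≤ (assignFinset (midE G n k)
                (fun e => H.interval (ξ (dec1 G e)) (ξ (dec2 G e))) ξ).card :=
                Finset.card_le_card (fiber_subset hV hA hmidarc hξhom)
            _ = Mval H G n ξ ^ k := by rw [assign_card, prod_midT_eq]
            _ ≤ (Wt G n - 1) ^ k :=
                Nat.pow_le_pow_left (Mval_lt hGTa hhG hGp hH hhH hξhom hns) k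
      _ ≤ (homFinset G H).card * (Wt G n - 1) ^ k := by
          rw [Finset.sum_const, smul_eq_mul]
          apply Nat.mul_le_mul_right
          exact Finset.card_le_card (Finset.filter_subset _ _)

end Counting

section Arith

lemma two_term_binom (a : ℕ) : ∀ km : ℕ, a ^ (km + 1) + (km + 1) * a ^ km ≤ (a + 1) ^ (km + 1) := by
  intro km
  induction km with
  | zero => simp
  | succ j ih =>
    have h1 : (a+1)^(j+1+1) = (a+1)^(j+1) * (a+1) := by ring
    have h2 : (a ^ (j + 1) + (j + 1) * a ^ j) * (a + 1) ≤ (a+1)^(j+1) * (a+1) :=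
      Nat.mul_le_mul_right _ ih
    have h3 : a ^ (j+1+1) + (j+1+1) * a ^ (j+1) ≤ (a ^ (j + 1) + (j + 1) * a ^ j) * (a + 1) := by
      have e1 : a ^ (j+1) = a ^ j * a := by ring
      have e2 : a ^ (j+1+1) = a ^ (j+1) * a := by ring
      nlinarith [pow_nonneg (Nat.zero_le a) j]
    omega

lemma count_compare {A B C W : ℕ} (hW : 2 ≤ W)
    (h : ∀ km : ℕ, A * W ^ km ≤ B * W ^ km + C * (W - 1) ^ km) : A ≤ B := by
  by_contra hAB
  push_neg at hAB
  have key : ∀ km, W ^ km ≤ C * (W - 1) ^ km := by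
    intro km
    have h1 := h km
    have h2 : (B + 1) * W ^ km ≤ A * W ^ km := Nat.mul_le_mul_right _ (by omega)
    have h3 : (B + 1) * W ^ km = B * W ^ km + W ^ km := by ring
    omega
  set a := W - 1 with ha
  have ha1 : 1 ≤ a := by omega
  have haW : a + 1 = W := by omega
  set km := C * a + 1 with hkm
  have hbin := two_term_binom a (C * a)
  rw [haW] at hbin
  have hkey := key km
  have h4 : C * a ^ km = (C * a) * a ^ (C * a) := by
    rw [hkm]; ring
  have h5 : (C * a) * a ^ (C * a) ≤ (C * a) * a ^ (C * a) := le_refl _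
  have h6 : 1 ≤ a ^ (C * a) := Nat.one_le_pow _ _ (by omega)
  -- W ^ km ≥ a^km + km * a^(C*a) > C * a^km
  have h7 : a ^ km + km * a ^ (C * a) ≤ W ^ km := by
    rw [hkm] at *
    exact hbin
  have h8 : C * a ^ km < a ^ km + km * a ^ (C * a) := by
    rw [h4, hkm]
    have : C * a * a ^ (C * a) < (C * a + 1) * a ^ (C * a) := by
      have := Nat.one_le_pow (C*a) a (by omega)
      nlinarith
    omega
  omega

end Arith
end
end Dgraph
namespace Dgraph
noncomputable section
open scoped Classical

variable {G : Dgraph} {n k : ℕ}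

lemma mem_midE {e : ℕ} : e ∈ midE G n k ↔ ∃ t ∈ midT G n k, enc G t = e := by
  rw [midE, Finset.mem_image]

lemma midE_disj {x : ℕ} (hx : x ∈ G.V) : x ∉ midE G n k := by
  intro h
  obtain ⟨t, _, rfl⟩ := mem_midE.1 h
  exact enc_not_mem_V t hx

/-- the gadget for part (i): each arc on a maximal path gets `k • cnt` midpoints. -/
def gadget1 (G : Dgraph) (n k : ℕ) : Dgraph where
  V := G.V ∪ midE G n k
  nonempty := by
    obtain ⟨v, hv⟩ := G.nonempty
    exact ⟨v, Finset.mem_union_left _ hv⟩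
  A := G.A ∪ (midT G n k).image (fun t => (t.1.1, enc G t))
        ∪ (midT G n k).image (fun t => (enc G t, t.1.2))
  A_sub := by
    intro p hp
    rcases Finset.mem_union.1 hp with hp | hp
    · rcases Finset.mem_union.1 hp with hp | hp
      · exact ⟨Finset.mem_union_left _ (G.A_sub p hp).1,
          Finset.mem_union_left _ (G.A_sub p hp).2⟩
      · rw [Finset.mem_image] at hp
        obtain ⟨t, ht, rfl⟩ := hp
        have ht1 := (mem_midT.1 ht).1
        rw [Astar, Finset.mem_filter] at ht1
        exact ⟨Finset.mem_union_left _ (G.A_sub _ ht1.1).1,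
          Finset.mem_union_right _ (mem_midE.2 ⟨t, ht, rfl⟩)⟩
    · rw [Finset.mem_image] at hp
      obtain ⟨t, ht, rfl⟩ := hp
      have ht1 := (mem_midT.1 ht).1
      rw [Astar, Finset.mem_filter] at ht1
      exact ⟨Finset.mem_union_right _ (mem_midE.2 ⟨t, ht, rfl⟩),
        Finset.mem_union_left _ (G.A_sub _ ht1.1).2⟩

lemma gadget1_V : (gadget1 G n k).V = G.V ∪ midE G n k := rfl

lemma gadget1_A_sub : G.A ⊆ (gadget1 G n k).A := by
  intro p hp
  exact Finset.mem_union_left _ (Finset.mem_union_left _ hp)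

lemma gadget1_midarc : ∀ t ∈ midT G n k,
    (t.1.1, enc G t) ∈ (gadget1 G n k).A ∧ (enc G t, t.1.2) ∈ (gadget1 G n k).A := by
  intro t ht
  constructor
  · exact Finset.mem_union_left _ (Finset.mem_union_right _ (Finset.mem_image_of_mem _ ht))
  · exact Finset.mem_union_right _ (Finset.mem_image_of_mem _ ht)

lemma gadget1_memTa (hGTa : G.MemTa) : (gadget1 G n k).MemTa := by
  apply memTa_of_rank _ (fun x => if x ∈ G.V then 2 * rk G x else 2 * rk G (dec1 G x) + 1)
  intro x y hxy hne
  rcases Finset.mem_union.1 hxy with h | h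
  · rcases Finset.mem_union.1 h with h | h
    · have h1 := (G.A_sub _ h).1
      have h2 := (G.A_sub _ h).2
      rw [if_pos h1, if_pos h2]
      have := rk_lt hGTa h hne
      omega
    · rw [Finset.mem_image] at h
      obtain ⟨t, ht, he⟩ := h
      obtain ⟨⟨a1, a2⟩, j⟩ := t
      injection he with h1 h2
      subst h1; subst h2
      have ht1 := (mem_midT.1 ht).1
      rw [Astar, Finset.mem_filter] at ht1
      have h1 := (G.A_sub _ ht1.1).1
      rw [if_pos h1, if_neg (enc_not_mem_V _), dec1_enc]
      dsimp only
      omega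
  · rw [Finset.mem_image] at h
    obtain ⟨t, ht, he⟩ := h
    obtain ⟨⟨a1, a2⟩, j⟩ := t
    injection he with h1 h2
    subst h1; subst h2
    have ht1 := (mem_midT.1 ht).1
    rw [Astar, Finset.mem_filter] at ht1
    have h2 := (G.A_sub _ ht1.1).2
    rw [if_neg (enc_not_mem_V _), if_pos h2, dec1_enc]
    have h6 : G.rk a1 < G.rk a2 := rk_lt hGTa ht1.1 ht1.2
    dsimp only
    omega

lemma gadget1_A4 {H : Dgraph} :
    ∀ ξ ∈ Hom G H, (∀ p ∈ G.Astar, ξ p.1 ≠ ξ p.2) → ∀ f : ℕ → ℕ,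
      (∀ t ∈ midT G n k, f (enc G t) ∈ H.interval (ξ t.1.1) (ξ t.1.2)) →
      (∀ x, x ∉ midE G n k → f x = ξ x) → f ∈ Hom (gadget1 G n k) H := by
  intro ξ hξ _hstrict f hmid hout
  have hagree : ∀ v ∈ G.V, f v = ξ v := fun v hv => hout v (midE_disj hv)
  refine ⟨?_, ?_, ?_⟩
  · intro v hv
    rcases Finset.mem_union.1 hv with hv | hv
    · rw [hagree v hv]; exact hξ.1 v hv
    · obtain ⟨t, ht, rfl⟩ := mem_midE.1 hv
      exact (Finset.mem_filter.1 (hmid t ht)).1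
  · intro p hp
    rcases Finset.mem_union.1 hp with hp | hp
    · rcases Finset.mem_union.1 hp with hp | hp
      · have h1 := (G.A_sub _ hp).1
        have h2 := (G.A_sub _ hp).2
        rw [show f p.1 = ξ p.1 from hagree _ h1, show f p.2 = ξ p.2 from hagree _ h2]
        exact hξ.2.1 p hp
      · rw [Finset.mem_image] at hp
        obtain ⟨t, ht, he⟩ := hp
        have ht1 := (mem_midT.1 ht).1
        rw [Astar, Finset.mem_filter] at ht1
        have h1 := (G.A_sub _ ht1.1).1
        have hmt := mem_interval.1 (hmid t ht)
        rw [← he]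
        show (f t.1.1, f (enc G t)) ∈ H.A
        rw [hagree _ h1]
        exact hmt.2.1
    · rw [Finset.mem_image] at hp
      obtain ⟨t, ht, he⟩ := hp
      have ht1 := (mem_midT.1 ht).1
      rw [Astar, Finset.mem_filter] at ht1
      have h2 := (G.A_sub _ ht1.1).2
      have hmt := mem_interval.1 (hmid t ht)
      rw [← he]
      show (f (enc G t), f t.1.2) ∈ H.A
      rw [hagree _ h2]
      exact hmt.2.2
  · intro v hv
    rw [gadget1_V] at hv
    have h1 : v ∉ G.V := fun h => hv (Finset.mem_union_left _ h)
    have h2 : v ∉ midE G n k := fun h => hv (Finset.mem_union_right _ h)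
    rw [hout v h2]
    exact hξ.2.2 v h1

lemma maxPaths_card_pos (hG : MemTaEq n G) : 1 ≤ (maxPaths G n).card := by
  obtain ⟨v, hv⟩ := G.nonempty
  obtain ⟨p, hp, hlen, _⟩ := hG.2.2 v hv
  exact Finset.card_pos.2 ⟨p, mem_maxPaths.2 ⟨hp, hlen⟩⟩

lemma Wt_ge_two (hG : MemTaEq n G) (hn : 1 ≤ n) : 2 ≤ Wt G n := by
  have h1 := maxPaths_card_pos hG
  rw [Wt]
  calc 2 = 2 ^ 1 := by norm_num
    _ ≤ 2 ^ ((maxPaths G n).card * n) := Nat.pow_le_pow_right (by omega) (by nlinarith)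

end
end Dgraph
namespace Dgraph
noncomputable section
open scoped Classical

variable {G H : Dgraph} {n k : ℕ}

lemma strict_arc_interval_set (hHTa : H.MemTa) (hHrefl : H.IsRefl)
    (hhH : H.height = n) {ξ : ℕ → ℕ} (hξ : ξ ∈ Hom G H)
    (hstrict : ∀ p ∈ G.Astar, ξ p.1 ≠ ξ p.2) {a : ℕ × ℕ}
    (hpa : ∃ p ∈ maxPaths G n, a ∈ arcsOfN p n) :
    H.interval (ξ a.1) (ξ a.2) = {ξ a.1, ξ a.2} := by
  obtain ⟨p, hp, ha⟩ := hpa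
  obtain ⟨i, hi, rfl⟩ := mem_arcsOfN.1 ha
  have hP := maxPaths_fpath hp
  set P : ℕ → ℕ := fun i => p.getD i 0 with hPdef
  have harc : ∀ j < n, (P j, P (j+1)) ∈ G.Astar := by
    intro j hj
    rw [Astar, Finset.mem_filter]
    refine ⟨hP.2.1 j hj, fun he => ?_⟩
    have := hP.2.2 j (by omega) (j+1) (by omega) he
    omega
  have hξP : H.FPath (fun j => ξ (P j)) H.height := by
    rw [hhH]
    apply fpath_of_proper hHTa
    · intro j hj
      exact hξ.1 _ (hP.1 j hj)
    · intro j hj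
      exact ⟨hξ.2.1 _ (hP.2.1 j hj), hstrict _ (harc j hj)⟩
  exact interval_pair hHTa hHrefl hξP (by rw [hhH]; exact hi)

/-- arc `(t.1.1, t.1.2)` of a midpoint index is a proper arc of `G`. -/
lemma midT_arc {t : (_ : ℕ × ℕ) × ℕ} (ht : t ∈ midT G n k) :
    (t.1.1, t.1.2) ∈ G.A ∧ t.1.1 ≠ t.1.2 := by
  have h := (mem_midT.1 ht).1
  rw [Astar, Finset.mem_filter] at h
  exact h

/-- The gadget for part (ii): a poset version. -/
def gadget2 (G : Dgraph) (n k : ℕ) : Dgraph where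
  V := G.V ∪ midE G n k
  nonempty := by
    obtain ⟨v, hv⟩ := G.nonempty
    exact ⟨v, Finset.mem_union_left _ hv⟩
  A := G.A
    ∪ ((G.V ×ˢ midT G n k).filter (fun q => (q.1, q.2.1.1) ∈ G.A)).image
        (fun q => (q.1, enc G q.2))
    ∪ ((G.V ×ˢ midT G n k).filter (fun q => (q.2.1.2, q.1) ∈ G.A)).image
        (fun q => (enc G q.2, q.1))
    ∪ ((midT G n k ×ˢ midT G n k).filter (fun q => (q.1.1.2, q.2.1.1) ∈ G.A)).image
        (fun q => (enc G q.1, enc G q.2))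
    ∪ (midT G n k).image (fun t => (enc G t, enc G t))
  A_sub := by
    intro p hp
    rcases Finset.mem_union.1 hp with hp | hp
    · rcases Finset.mem_union.1 hp with hp | hp
      · rcases Finset.mem_union.1 hp with hp | hp
        · rcases Finset.mem_union.1 hp with hp | hp
          · exact ⟨Finset.mem_union_left _ (G.A_sub p hp).1,
              Finset.mem_union_left _ (G.A_sub p hp).2⟩
          · rw [Finset.mem_image] at hp
            obtain ⟨q, hq, rfl⟩ := hp
            rw [Finset.mem_filter, Finset.mem_product] at hq
            exact ⟨Finset.mem_union_left _ hq.1.1,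
              Finset.mem_union_right _ (mem_midE.2 ⟨q.2, hq.1.2, rfl⟩)⟩
        · rw [Finset.mem_image] at hp
          obtain ⟨q, hq, rfl⟩ := hp
          rw [Finset.mem_filter, Finset.mem_product] at hq
          exact ⟨Finset.mem_union_right _ (mem_midE.2 ⟨q.2, hq.1.2, rfl⟩),
            Finset.mem_union_left _ hq.1.1⟩
      · rw [Finset.mem_image] at hp
        obtain ⟨q, hq, rfl⟩ := hp
        rw [Finset.mem_filter, Finset.mem_product] at hq
        exact ⟨Finset.mem_union_right _ (mem_midE.2 ⟨q.1, hq.1.1, rfl⟩),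
          Finset.mem_union_right _ (mem_midE.2 ⟨q.2, hq.1.2, rfl⟩)⟩
    · rw [Finset.mem_image] at hp
      obtain ⟨t, ht, rfl⟩ := hp
      exact ⟨Finset.mem_union_right _ (mem_midE.2 ⟨t, ht, rfl⟩),
        Finset.mem_union_right _ (mem_midE.2 ⟨t, ht, rfl⟩)⟩

lemma gadget2_V : (gadget2 G n k).V = G.V ∪ midE G n k := rfl

lemma mem_gadget2_A {x y : ℕ} :
    (x, y) ∈ (gadget2 G n k).A ↔
      (x, y) ∈ G.A
      ∨ (∃ t ∈ midT G n k, x ∈ G.V ∧ (x, t.1.1) ∈ G.A ∧ y = enc G t)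
      ∨ (∃ t ∈ midT G n k, y ∈ G.V ∧ (t.1.2, y) ∈ G.A ∧ x = enc G t)
      ∨ (∃ t ∈ midT G n k, ∃ t' ∈ midT G n k,
          (t.1.2, t'.1.1) ∈ G.A ∧ x = enc G t ∧ y = enc G t')
      ∨ (∃ t ∈ midT G n k, x = enc G t ∧ y = enc G t) := by
  show (x, y) ∈ _ ∪ _ ∪ _ ∪ _ ∪ _ ↔ _
  rw [Finset.mem_union, Finset.mem_union, Finset.mem_union, Finset.mem_union]
  constructor
  · rintro ((((h | h) | h) | h) | h)
    · exact Or.inl h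
    · rw [Finset.mem_image] at h
      obtain ⟨q, hq, he⟩ := h
      rw [Finset.mem_filter, Finset.mem_product] at hq
      injection he with h1 h2
      exact Or.inr (Or.inl ⟨q.2, hq.1.2, h1 ▸ hq.1.1, h1 ▸ hq.2, h2.symm⟩)
    · rw [Finset.mem_image] at h
      obtain ⟨q, hq, he⟩ := h
      rw [Finset.mem_filter, Finset.mem_product] at hq
      injection he with h1 h2
      exact Or.inr (Or.inr (Or.inl ⟨q.2, hq.1.2, h2 ▸ hq.1.1, h2 ▸ hq.2, h1.symm⟩))
    · rw [Finset.mem_image] at h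
      obtain ⟨q, hq, he⟩ := h
      rw [Finset.mem_filter, Finset.mem_product] at hq
      injection he with h1 h2
      exact Or.inr (Or.inr (Or.inr (Or.inl
        ⟨q.1, hq.1.1, q.2, hq.1.2, hq.2, h1.symm, h2.symm⟩)))
    · rw [Finset.mem_image] at h
      obtain ⟨t, ht, he⟩ := h
      injection he with h1 h2
      exact Or.inr (Or.inr (Or.inr (Or.inr ⟨t, ht, h1.symm, h2.symm⟩)))
  · rintro (h | ⟨t, ht, hxV, ha, rfl⟩ | ⟨t, ht, hyV, ha, rfl⟩ |
      ⟨t, ht, t', ht', ha, rfl, rfl⟩ | ⟨t, ht, rfl, rfl⟩)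
    · exact Or.inl (Or.inl (Or.inl (Or.inl h)))
    · refine Or.inl (Or.inl (Or.inl (Or.inr ?_)))
      rw [Finset.mem_image]
      exact ⟨(x, t), by rw [Finset.mem_filter, Finset.mem_product]; exact ⟨⟨hxV, ht⟩, ha⟩, rfl⟩
    · refine Or.inl (Or.inl (Or.inr ?_))
      rw [Finset.mem_image]
      exact ⟨(y, t), by rw [Finset.mem_filter, Finset.mem_product]; exact ⟨⟨hyV, ht⟩, ha⟩, rfl⟩
    · refine Or.inl (Or.inr ?_)
      rw [Finset.mem_image]
      exact ⟨(t, t'), by rw [Finset.mem_filter, Finset.mem_product]; exact ⟨⟨ht, ht'⟩, ha⟩, rfl⟩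
    · refine Or.inr ?_
      rw [Finset.mem_image]
      exact ⟨t, ht, rfl⟩

lemma gadget2_A_sub : G.A ⊆ (gadget2 G n k).A := by
  intro p hp
  have : ((p.1 : ℕ), (p.2 : ℕ)) ∈ (gadget2 G n k).A := mem_gadget2_A.2 (Or.inl (by
    simpa using hp))
  simpa using this

lemma gadget2_midarc (hGrefl : G.IsRefl) : ∀ t ∈ midT G n k,
    (t.1.1, enc G t) ∈ (gadget2 G n k).A ∧ (enc G t, t.1.2) ∈ (gadget2 G n k).A := by
  intro t ht
  have ha := (midT_arc ht).1
  have h1 : t.1.1 ∈ G.V := (G.A_sub _ ha).1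
  have h2 : t.1.2 ∈ G.V := (G.A_sub _ ha).2
  constructor
  · exact mem_gadget2_A.2 (Or.inr (Or.inl ⟨t, ht, h1, hGrefl _ h1, rfl⟩))
  · exact mem_gadget2_A.2 (Or.inr (Or.inr (Or.inl ⟨t, ht, h2, hGrefl _ h2, rfl⟩)))

lemma gadget2_rank (hGTa : G.MemTa) :
    ∀ x y, (x, y) ∈ (gadget2 G n k).A → x ≠ y →
      (if x ∈ G.V then 2 * rk G x else 2 * rk G (dec1 G x) + 1) <
      (if y ∈ G.V then 2 * rk G y else 2 * rk G (dec1 G y) + 1) := by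
  intro x y hxy hne
  have hrk : ∀ a b : ℕ, (a, b) ∈ G.A → rk G a ≤ rk G b := by
    intro a b hab
    by_cases h : a = b
    · subst h; exact le_refl _
    · exact le_of_lt (rk_lt hGTa hab h)
  rcases mem_gadget2_A.1 hxy with h | ⟨t, ht, hxV, ha, rfl⟩ | ⟨t, ht, hyV, ha, rfl⟩ |
      ⟨t, ht, t', ht', ha, rfl, rfl⟩ | ⟨t, ht, rfl, rfl⟩
  · have h1 := (G.A_sub _ h).1
    have h2 := (G.A_sub _ h).2
    rw [if_pos h1, if_pos h2]
    have := rk_lt hGTa h hne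
    omega
  · rw [if_pos hxV, if_neg (enc_not_mem_V _), dec1_enc]
    have := hrk _ _ ha
    omega
  · rw [if_neg (enc_not_mem_V _), if_pos hyV, dec1_enc]
    have h3 := hrk _ _ ha
    have h4 := rk_lt hGTa (midT_arc ht).1 (midT_arc ht).2
    omega
  · rw [if_neg (enc_not_mem_V _), if_neg (enc_not_mem_V _), dec1_enc, dec1_enc]
    have h3 := hrk _ _ ha
    have h4 := rk_lt hGTa (midT_arc ht).1 (midT_arc ht).2
    omega
  · exact absurd rfl hne

lemma gadget2_poset (hGTa : G.MemTa) (hGpos : G.IsPoset) :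
    (gadget2 G n k).IsPoset := by
  obtain ⟨hrefl, hanti, htrans⟩ := hGpos
  refine ⟨?_, ?_, ?_⟩
  · -- reflexive
    intro v hv
    rcases Finset.mem_union.1 hv with hv | hv
    · exact gadget2_A_sub (hrefl v hv)
    · obtain ⟨t, ht, rfl⟩ := mem_midE.1 hv
      exact mem_gadget2_A.2 (Or.inr (Or.inr (Or.inr (Or.inr ⟨t, ht, rfl, rfl⟩))))
  · -- antisymmetric
    intro v w h1 h2
    by_contra hne
    have ha := gadget2_rank hGTa v w h1 hne
    have hb := gadget2_rank hGTa w v h2 (fun he => hne he.symm)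
    omega
  · -- transitive
    intro x y z hxy hyz
    have henc_ne_V : ∀ (t : (_ : ℕ × ℕ) × ℕ), enc G t ∉ G.V := enc_not_mem_V
    rcases mem_gadget2_A.1 hxy with h | ⟨t, ht, hxV, ha, rfl⟩ | ⟨t, ht, hyV, ha, hxe⟩ |
        ⟨t, ht, t', ht', ha, hxe, rfl⟩ | ⟨t, ht, hxe, rfl⟩
    · -- C1 : x,y ∈ V, (x,y) ∈ G.A
      have hyV := (G.A_sub _ h).2
      rcases mem_gadget2_A.1 hyz with h' | ⟨s, hs, hyV', hb, rfl⟩ | ⟨s, hs, hzV, hb, hye⟩ |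
          ⟨s, hs, s', hs', hb, hye, rfl⟩ | ⟨s, hs, hye, rfl⟩
      · exact gadget2_A_sub (htrans _ _ _ h h')
      · exact mem_gadget2_A.2 (Or.inr (Or.inl
          ⟨s, hs, (G.A_sub _ h).1, htrans _ _ _ h hb, rfl⟩))
      · exact absurd (hye ▸ hyV) (henc_ne_V s)
      · exact absurd (hye ▸ hyV) (henc_ne_V s)
      · exact absurd (hye ▸ hyV) (henc_ne_V s)
    · -- C2 : x ∈ V, y = enc t
      rcases mem_gadget2_A.1 hyz with h' | ⟨s, hs, hyV', hb, rfl⟩ | ⟨s, hs, hzV, hb, hye⟩ |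
          ⟨s, hs, s', hs', hb, hye, rfl⟩ | ⟨s, hs, hye, rfl⟩
      · exact absurd (G.A_sub _ h').1 (henc_ne_V t)
      · exact absurd hyV' (henc_ne_V t)
      · -- y = enc t = enc s, so s = t; (t.1.2, z) ∈ A
        have hst : s = t := enc_injective G hye.symm
        subst hst
        refine mem_gadget2_A.2 (Or.inl ?_)
        exact htrans _ _ _ (htrans _ _ _ ha (midT_arc ht).1) hb
      · have hst : s = t := enc_injective G hye.symm
        subst hst
        refine mem_gadget2_A.2 (Or.inr (Or.inl ⟨s', hs', hxV, ?_, rfl⟩))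
        exact htrans _ _ _ (htrans _ _ _ ha (midT_arc ht).1) hb
      · have hst : s = t := enc_injective G hye.symm
        subst hst
        exact mem_gadget2_A.2 (Or.inr (Or.inl ⟨s, ht, hxV, ha, rfl⟩))
    · -- C3 : x = enc t, y ∈ V
      subst hxe
      rcases mem_gadget2_A.1 hyz with h' | ⟨s, hs, hyV', hb, rfl⟩ | ⟨s, hs, hzV, hb, hye⟩ |
          ⟨s, hs, s', hs', hb, hye, rfl⟩ | ⟨s, hs, hye, rfl⟩
      · exact mem_gadget2_A.2 (Or.inr (Or.inr (Or.inl
          ⟨t, ht, (G.A_sub _ h').2, htrans _ _ _ ha h', rfl⟩)))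
      · exact mem_gadget2_A.2 (Or.inr (Or.inr (Or.inr (Or.inl
          ⟨t, ht, s, hs, htrans _ _ _ ha hb, rfl, rfl⟩))))
      · exact absurd (hye ▸ hyV) (henc_ne_V s)
      · exact absurd (hye ▸ hyV) (henc_ne_V s)
      · exact absurd (hye ▸ hyV) (henc_ne_V s)
    · -- C4 : x = enc t, y = enc t'
      subst hxe
      rcases mem_gadget2_A.1 hyz with h' | ⟨s, hs, hyV', hb, rfl⟩ | ⟨s, hs, hzV, hb, hye⟩ |
          ⟨s, hs, s', hs', hb, hye, rfl⟩ | ⟨s, hs, hye, rfl⟩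
      · exact absurd (G.A_sub _ h').1 (henc_ne_V t')
      · exact absurd hyV' (henc_ne_V t')
      · have hst : s = t' := enc_injective G hye.symm
        subst hst
        refine mem_gadget2_A.2 (Or.inr (Or.inr (Or.inl ⟨t, ht, hzV, ?_, rfl⟩)))
        exact htrans _ _ _ (htrans _ _ _ ha (midT_arc ht').1) hb
      · have hst : s = t' := enc_injective G hye.symm
        subst hst
        refine mem_gadget2_A.2 (Or.inr (Or.inr (Or.inr (Or.inl ⟨t, ht, s', hs', ?_, rfl, rfl⟩))))
        exact htrans _ _ _ (htrans _ _ _ ha (midT_arc ht').1) hb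
      · have hst : s = t' := enc_injective G hye.symm
        subst hst
        exact mem_gadget2_A.2 (Or.inr (Or.inr (Or.inr (Or.inl ⟨t, ht, s, ht', ha, rfl, rfl⟩))))
    · -- C5 : x = y = enc t
      subst hxe
      exact hyz

end
end Dgraph
namespace Dgraph
noncomputable section
open scoped Classical

variable {G H : Dgraph} {n k : ℕ}

lemma gadget2_A4 (hGpos : G.IsPoset) (hHTa : H.MemTa) (hHrefl : H.IsRefl)
    (hhH : H.height = n) :
    ∀ ξ ∈ Hom G H, (∀ p ∈ G.Astar, ξ p.1 ≠ ξ p.2) → ∀ f : ℕ → ℕ,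
      (∀ t ∈ midT G n k, f (enc G t) ∈ H.interval (ξ t.1.1) (ξ t.1.2)) →
      (∀ x, x ∉ midE G n k → f x = ξ x) → f ∈ Hom (gadget2 G n k) H := by
  obtain ⟨hGrefl, _hGanti, hGtrans⟩ := hGpos
  intro ξ hξ hstrict f hmid hout
  have hagree : ∀ v ∈ G.V, f v = ξ v := fun v hv => hout v (midE_disj hv)
  have hpair : ∀ t ∈ midT G n k, f (enc G t) = ξ t.1.1 ∨ f (enc G t) = ξ t.1.2 := by
    intro t ht
    have h1 := hmid t ht
    rw [strict_arc_interval_set hHTa hHrefl hhH hξ hstrict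
      (midT_arc_on_path ht)] at h1
    simpa using h1
  refine ⟨?_, ?_, ?_⟩
  · intro v hv
    rcases Finset.mem_union.1 hv with hv | hv
    · rw [hagree v hv]; exact hξ.1 v hv
    · obtain ⟨t, ht, rfl⟩ := mem_midE.1 hv
      exact (mem_interval.1 (hmid t ht)).1
  · rintro ⟨x, y⟩ hp
    rcases mem_gadget2_A.1 hp with h | ⟨t, ht, hxV, ha, rfl⟩ | ⟨t, ht, hyV, ha, rfl⟩ |
        ⟨t, ht, t', ht', ha, rfl, rfl⟩ | ⟨t, ht, rfl, rfl⟩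
    · show (f x, f y) ∈ H.A
      rw [hagree _ (G.A_sub _ h).1, hagree _ (G.A_sub _ h).2]
      exact hξ.2.1 (x, y) h
    · show (f x, f (enc G t)) ∈ H.A
      rw [hagree _ hxV]
      rcases hpair t ht with he | he
      · rw [he]; exact hξ.2.1 (x, t.1.1) ha
      · rw [he]
        exact hξ.2.1 (x, t.1.2) (hGtrans _ _ _ ha (midT_arc ht).1)
    · show (f (enc G t), f y) ∈ H.A
      rw [hagree _ hyV]
      rcases hpair t ht with he | he
      · rw [he]
        exact hξ.2.1 (t.1.1, y) (hGtrans _ _ _ (midT_arc ht).1 ha)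
      · rw [he]; exact hξ.2.1 (t.1.2, y) ha
    · show (f (enc G t), f (enc G t')) ∈ H.A
      have a1 : (t.1.1, t'.1.1) ∈ G.A := hGtrans _ _ _ (midT_arc ht).1 ha
      have a2 : (t.1.2, t'.1.2) ∈ G.A := hGtrans _ _ _ ha (midT_arc ht').1
      have a3 : (t.1.1, t'.1.2) ∈ G.A := hGtrans _ _ _ a1 (midT_arc ht').1
      rcases hpair t ht with he | he <;> rcases hpair t' ht' with he' | he' <;>
        rw [he, he']
      · exact hξ.2.1 _ a1
      · exact hξ.2.1 _ a3
      · exact hξ.2.1 _ ha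
      · exact hξ.2.1 _ a2
    · show (f (enc G t), f (enc G t)) ∈ H.A
      rcases hpair t ht with he | he <;> rw [he]
      · exact hHrefl _ (hξ.1 _ (G.A_sub _ (midT_arc ht).1).1)
      · exact hHrefl _ (hξ.1 _ (G.A_sub _ (midT_arc ht).1).2)
  · intro v hv
    rw [gadget2_V] at hv
    have h1 : v ∉ G.V := fun h => hv (Finset.mem_union_left _ h)
    have h2 : v ∉ midE G n k := fun h => hv (Finset.mem_union_right _ h)
    rw [hout v h2]
    exact hξ.2.2 v h1

lemma part_i {n : ℕ} (hn : 1 ≤ n) {R S : Dgraph} (hR : MemR R) (hS : MemR S)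
    (hhR : R.height = n) (hhS : S.height = n)
    (hyp : ∀ G : Dgraph, G.MemTa → (Hom G R).ncard ≤ (Hom G S).ncard) :
    ∀ G : Dgraph, MemTaEq n G → (SHom G R).ncard ≤ (SHom G S).ncard := by
  intro G hG
  rw [ncard_shom, ncard_shom]
  refine count_compare (C := (homFinset G S).card) (Wt_ge_two hG hn) ?_
  intro km
  have hb1 := bound1 (Γ := gadget1 G n km) (k := km) hG.1 hR.1 hR.2.1 hhR rfl
    gadget1_A_sub gadget1_midarc gadget1_A4
  have hb2 := bound2 (Γ := gadget1 G n km) (k := km) hG.1 hG.2.1 hG.2.2 hS hhS rfl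
    gadget1_A_sub gadget1_midarc
  have h3 := hyp (gadget1 G n km) (gadget1_memTa hG.1)
  rw [ncard_hom, ncard_hom] at h3
  omega

lemma part_ii {n : ℕ} (hn : 1 ≤ n) {R S : Dgraph} (hR : MemR R) (hS : MemR S)
    (hhR : R.height = n) (hhS : S.height = n)
    (hyp : ∀ G : Dgraph, G.IsPoset → (Hom G R).ncard ≤ (Hom G S).ncard) :
    ∀ G : Dgraph, MemTaEq n G → G.IsPoset → (SHom G R).ncard ≤ (SHom G S).ncard := by
  intro G hG hGpos
  rw [ncard_shom, ncard_shom]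
  refine count_compare (C := (homFinset G S).card) (Wt_ge_two hG hn) ?_
  intro km
  have hb1 := bound1 (Γ := gadget2 G n km) (k := km) hG.1 hR.1 hR.2.1 hhR rfl
    gadget2_A_sub (gadget2_midarc hGpos.1) (gadget2_A4 hGpos hR.1 hR.2.1 hhR)
  have hb2 := bound2 (Γ := gadget2 G n km) (k := km) hG.1 hG.2.1 hG.2.2 hS hhS rfl
    gadget2_A_sub (gadget2_midarc hGpos.1)
  have h3 := hyp (gadget2 G n km) (gadget2_poset hG.1 hGpos)
  rw [ncard_hom, ncard_hom] at h3
  omega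

end
end Dgraph

open Dgraph

theorem stmt_1 (n : ℕ) (hn : 1 ≤ n) (R S : Dgraph) (hR : MemR R) (hS : MemR S)
    (hhR : R.height = n) (hhS : S.height = n) :
    ((∀ G : Dgraph, G.MemTa → (Hom G R).ncard ≤ (Hom G S).ncard) →
      ∀ G : Dgraph, MemTaEq n G → (SHom G S).Nonempty →
        (SHom G R).ncard ≤ (SHom G S).ncard) ∧
    ((∀ G : Dgraph, G.IsPoset → (Hom G R).ncard ≤ (Hom G S).ncard) →
      ∀ G : Dgraph, MemTaEq n G → G.IsPoset →
        (SHom G R).ncard ≤ (SHom G S).ncard) := by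
  constructor
  · intro hyp G hG _
    exact part_i hn hR hS hhR hhS hyp G hG
  · intro hyp G hG hGpos
    exact part_ii hn hR hS hhR hhS hyp G hG hGpos
end
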